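/- arXiv:1104.3856 — 8 statements merged into one kernel-verified Lean document; each statement's English description precedes it below -/
import Mathlib

section
/- For every natural number n, the identity ∑_{k=0}^n C(2k,k)^3 * C(k, n-k) * (-16)^(n-k) = ∑_{k=0}^n C(2k,k)^2 * C(2(n-k), n-k)^2 holds. -/
open Finset
set_option maxRecDepth 10000

def cbz (m : ℕ) : ℤ := ((2 * m).choose m : ℤ)

lemma cbz_succ (m : ℕ) : ((m:ℤ)+1) * cbz (m+1) = 2*(2*(m:ℤ)+1) * cbz m := by
  have h := Nat.succ_mul_centralBinom_succ m
  have h1 : Nat.centralBinom m = (2*m).choose m := rfl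
  have h2 : Nat.centralBinom (m+1) = (2*(m+1)).choose (m+1) := rfl
  rw [h1, h2] at h
  unfold cbz
  exact_mod_cast h

lemma cbz_succ_q (m : ℕ) : ((cbz (m+1) : ℚ)) = 2*(2*(m:ℚ)+1) * (cbz m : ℚ) / ((m:ℚ)+1) := by
  have h' : ((m:ℚ)+1) * (cbz (m+1) : ℚ) = 2*(2*(m:ℚ)+1) * (cbz m : ℚ) := by
    exact_mod_cast cbz_succ m
  field_simp
  linarith [h']

lemma choose_succ_int (a b : ℕ) :
    ((a.choose (b+1) : ℤ)) * ((b:ℤ)+1) = (a.choose b : ℤ) * ((a:ℤ) - b) := by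
  rcases le_or_gt b a with h | h
  · have hh := Nat.choose_succ_right_eq a b
    have hc : ((a - b : ℕ) : ℤ) = (a:ℤ) - b := by exact_mod_cast Int.ofNat_sub h
    calc ((a.choose (b+1) : ℤ)) * ((b:ℤ)+1) = ((a.choose (b+1) * (b+1) : ℕ) : ℤ) := by push_cast; ring
      _ = ((a.choose b * (a - b) : ℕ) : ℤ) := by rw [hh]
      _ = (a.choose b : ℤ) * ((a:ℤ) - b) := by push_cast [hc]; ring
  · rw [Nat.choose_eq_zero_of_lt (by omega), Nat.choose_eq_zero_of_lt h]
    simp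

lemma choose_succ_q (a b : ℕ) :
    ((a.choose (b+1) : ℚ)) = (a.choose b : ℚ) * ((a:ℚ) - b) / ((b:ℚ)+1) := by
  have h : ((a.choose (b+1) : ℚ)) * ((b:ℚ)+1) = (a.choose b : ℚ) * ((a:ℚ) - b) := by
    exact_mod_cast choose_succ_int a b
  have hb : ((b:ℚ)+1) ≠ 0 := by positivity
  field_simp
  linarith [h]

lemma choose_up_int (a b : ℕ) :
    (((a+1).choose b : ℤ)) * ((a:ℤ)+1-b) = (a.choose b : ℤ) * ((a:ℤ)+1) := by
  rcases le_or_gt b (a+1) with h | h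
  · have hh := Nat.choose_mul_succ_eq a b
    have hc : ((a + 1 - b : ℕ) : ℤ) = (a:ℤ)+1-b := by exact_mod_cast Int.ofNat_sub h
    calc (((a+1).choose b : ℤ)) * ((a:ℤ)+1-b) = (((a+1).choose b * (a+1-b) : ℕ) : ℤ) := by
          push_cast [hc]; ring
      _ = ((a.choose b * (a+1) : ℕ) : ℤ) := by rw [← hh]
      _ = (a.choose b : ℤ) * ((a:ℤ)+1) := by push_cast; ring
  · rw [Nat.choose_eq_zero_of_lt (by omega), Nat.choose_eq_zero_of_lt (by omega)]
    simp

lemma choose_up_q (a b : ℕ) (h : ((a:ℚ)+1-b) ≠ 0) :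
    (((a+1).choose b : ℚ)) = (a.choose b : ℚ) * ((a:ℚ)+1) / ((a:ℚ)+1-b) := by
  have hq : (((a+1).choose b : ℚ)) * ((a:ℚ)+1-b) = (a.choose b : ℚ) * ((a:ℚ)+1) := by
    exact_mod_cast choose_up_int a b
  field_simp
  linarith [hq]

def P0 (n : ℤ) : ℤ := (n+2)^3
def P1 (n : ℤ) : ℤ := -8*(2*n+3)*(2*n^2+6*n+5)
def P2 (n : ℤ) : ℤ := 256*(n+1)^3
def Paa (n k : ℤ) : ℤ := 1024*k^3 - 2048*k^4 - 512*n*k^2 + 2560*n*k^3 - 1024*n*k^4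
  - 768*n^2*k^2 + 1024*n^2*k^3 - 256*n^3*k^2
def Pbb (n k : ℤ) : ℤ := 160*k^2 - 736*k^3 + 1024*k^4 - 384*k^5 + 848*n*k^2 - 2560*n*k^3
  + 1856*n*k^4 - 256*n*k^5 + 1536*n^2*k^2 - 2560*n^2*k^3 + 768*n^2*k^4
  + 1088*n^3*k^2 - 768*n^3*k^3 + 256*n^4*k^2

def taz (n k : ℕ) : ℤ := cbz k ^ 3 * (k.choose (n-k) : ℤ) * (-16)^(n-k)
def tbz (n k : ℕ) : ℤ := cbz k ^ 2 * cbz (n-k) ^ 2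
def Taz (n k : ℕ) : ℤ := P0 n * taz (n+2) k + P1 n * taz (n+1) k + P2 n * taz n k
def Tbz (n k : ℕ) : ℤ := P0 n * tbz (n+2) k + P1 n * tbz (n+1) k + P2 n * tbz n k
def Saz (n : ℕ) : ℤ := ∑ k ∈ range (n+1), taz n k
def Sbz (n : ℕ) : ℤ := ∑ k ∈ range (n+1), tbz n k

lemma keyB (j v : ℕ) :
    ((v:ℤ)+2)^2*((v:ℤ)+3)^2 * Pbb ((j:ℤ)+v+1) ((j:ℤ)+1) * cbz (j+1)^2 * cbz v^2
      - ((v:ℤ)+1)^2*((v:ℤ)+2)^2 * Pbb ((j:ℤ)+v+1) (j:ℤ) * cbz j^2 * cbz (v+1)^2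
    = ((v:ℤ)+2)^2*((v:ℤ)+3)^2 * (((v:ℤ)+1)^2*((v:ℤ)+2)^2) *
        (P0 ((j:ℤ)+v+1) * cbz j^2 * cbz (v+3)^2
         + P1 ((j:ℤ)+v+1) * cbz j^2 * cbz (v+2)^2
         + P2 ((j:ℤ)+v+1) * cbz j^2 * cbz (v+1)^2) := by
  have hinj : Function.Injective (Int.cast : ℤ → ℚ) := Int.cast_injective
  apply hinj
  push_cast [P0, P1, P2, Pbb]
  rw [show v+3 = (v+2)+1 from rfl, show v+2 = (v+1)+1 from rfl]
  rw [cbz_succ_q (v+1+1), cbz_succ_q (v+1), cbz_succ_q v, cbz_succ_q j]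
  push_cast
  have h1 : ((v:ℚ)+1) ≠ 0 := by positivity
  have h2 : ((v:ℚ)+1+1) ≠ 0 := by positivity
  have h3 : ((v:ℚ)+1+1+1) ≠ 0 := by positivity
  have h4 : ((j:ℚ)+1) ≠ 0 := by positivity
  field_simp
  ring

lemma keyA (j v : ℕ) :
    ((v:ℤ)+2)*((v:ℤ)+3) * Paa ((j:ℤ)+v+1) ((j:ℤ)+1) * cbz (j+1)^3 * ((j+1).choose v : ℤ)
      - ((v:ℤ)+1)*((v:ℤ)+2) * Paa ((j:ℤ)+v+1) (j:ℤ) * cbz j^3 * (j.choose (v+1) : ℤ) * (-16)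
    = ((v:ℤ)+1)*((v:ℤ)+2)^2*((v:ℤ)+3) *
        (P0 ((j:ℤ)+v+1) * cbz j^3 * (j.choose (v+3) : ℤ) * (-4096)
         + P1 ((j:ℤ)+v+1) * cbz j^3 * (j.choose (v+2) : ℤ) * 256
         + P2 ((j:ℤ)+v+1) * cbz j^3 * (j.choose (v+1) : ℤ) * (-16)) := by
  rcases lt_trichotomy v (j+1) with hv | hv | hv
  · have hinj : Function.Injective (Int.cast : ℤ → ℚ) := Int.cast_injective
    apply hinj
    push_cast [P0, P1, P2, Paa]
    rw [show v+3 = (v+2)+1 from rfl, show v+2 = (v+1)+1 from rfl]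
    rw [choose_succ_q j (v+1+1), choose_succ_q j (v+1), choose_succ_q j v,
      choose_up_q j v (by
        have h : v ≤ j := by omega
        have h' : (v:ℚ) ≤ (j:ℚ) := by exact_mod_cast h
        intro hc; nlinarith), cbz_succ_q j]
    push_cast
    have h1 : ((v:ℚ)+1) ≠ 0 := by positivity
    have h2 : ((v:ℚ)+1+1) ≠ 0 := by positivity
    have h3 : ((v:ℚ)+1+1+1) ≠ 0 := by positivity
    have h4 : ((j:ℚ)+1) ≠ 0 := by positivity
    have h5 : ((j:ℚ)+1-v) ≠ 0 := by
      have h : v ≤ j := by omega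
      have h' : (v:ℚ) ≤ (j:ℚ) := by exact_mod_cast h
      intro hc; nlinarith
    field_simp
    ring
  · subst hv
    rw [Nat.choose_eq_zero_of_lt (show j < j+1+1 by omega),
      Nat.choose_eq_zero_of_lt (show j < j+1+2 by omega),
      Nat.choose_eq_zero_of_lt (show j < j+1+3 by omega),
      Nat.choose_self]
    have hPa : Paa ((j:ℤ)+(j+1)+1) ((j:ℤ)+1) = 0 := by simp only [Paa]; ring
    push_cast
    rw [hPa]
    ring
  · rw [Nat.choose_eq_zero_of_lt (show j < v+1 by omega),
      Nat.choose_eq_zero_of_lt (show j < v+2 by omega),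
      Nat.choose_eq_zero_of_lt (show j < v+3 by omega),
      Nat.choose_eq_zero_of_lt (show j+1 < v by omega)]
    push_cast
    ring

lemma TLb (j : ℕ) : ∀ v : ℕ,
    ((v:ℤ)+1)^2*((v:ℤ)+2)^2 * (∑ k ∈ range j, Tbz (j+v) k)
      = Pbb ((j:ℤ)+(v:ℤ)) (j:ℤ) * cbz j^2 * cbz v^2 := by
  induction j with
  | zero =>
    intro v
    simp [Pbb]
  | succ j ih =>
    intro v
    have hk := keyB j v
    have ihv := ih (v+1)
    rw [show j+1+v = j+(v+1) from by omega, Finset.sum_range_succ]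
    have s1 : j+(v+1)-j = v+1 := by omega
    have s2 : j+(v+1)+1-j = v+2 := by omega
    have s3 : j+(v+1)+2-j = v+3 := by omega
    simp only [Tbz, tbz, s1, s2, s3] at ihv ⊢
    push_cast at ihv hk ⊢
    refine mul_left_cancel₀ (a := (((v:ℤ)+2)^2*((v:ℤ)+3)^2)) (by positivity) ?_
    simp only [Pbb, P0, P1, P2] at ihv hk ⊢
    linear_combination (((v:ℤ)+1)^2*((v:ℤ)+2)^2) * ihv - hk

lemma TLa (j : ℕ) : ∀ v : ℕ,
    ((v:ℤ)+1)*((v:ℤ)+2) * (∑ k ∈ range j, Taz (j+v) k)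
      = Paa ((j:ℤ)+(v:ℤ)) (j:ℤ) * cbz j^3 * (j.choose v : ℤ) * (-16)^v := by
  induction j with
  | zero =>
    intro v
    simp [Paa]
  | succ j ih =>
    intro v
    have hk := keyA j v
    have ihv := ih (v+1)
    rw [show j+1+v = j+(v+1) from by omega, Finset.sum_range_succ]
    have s1 : j+(v+1)-j = v+1 := by omega
    have s2 : j+(v+1)+1-j = v+2 := by omega
    have s3 : j+(v+1)+2-j = v+3 := by omega
    simp only [Taz, taz, s1, s2, s3] at ihv ⊢
    push_cast at ihv hk ⊢
    refine mul_left_cancel₀ (a := (((v:ℤ)+2)*((v:ℤ)+3))) (by positivity) ?_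
    simp only [Paa, P0, P1, P2] at ihv hk ⊢
    linear_combination (((v:ℤ)+1)*((v:ℤ)+2)) * ihv - (-16:ℤ)^v * hk

lemma boundB (n : ℕ) :
    Pbb (n:ℤ) (n:ℤ) * cbz n^2
      + 4*((36*P0 (n:ℤ) + 4*P1 (n:ℤ) + P2 (n:ℤ))*cbz n^2
        + P0 (n:ℤ)*(4*cbz (n+1)^2 + cbz (n+2)^2) + P1 (n:ℤ) * cbz (n+1)^2) = 0 := by
  have hinj : Function.Injective (Int.cast : ℤ → ℚ) := Int.cast_injective
  apply hinj
  push_cast [P0, P1, P2, Pbb]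
  rw [show n+2 = (n+1)+1 from rfl, cbz_succ_q (n+1), cbz_succ_q n]
  push_cast
  have h1 : ((n:ℚ)+1) ≠ 0 := by positivity
  have h2 : ((n:ℚ)+1+1) ≠ 0 := by positivity
  field_simp
  ring

lemma boundA (n : ℕ) :
    Paa (n:ℤ) (n:ℤ) * cbz n^3
      + 2*((256*(n.choose 2:ℤ)*P0 (n:ℤ) - 16*(n:ℤ)*P1 (n:ℤ) + P2 (n:ℤ))*cbz n^3
        + P0 (n:ℤ)*(-16*((n:ℤ)+1)*cbz (n+1)^3 + cbz (n+2)^3) + P1 (n:ℤ) * cbz (n+1)^3) = 0 := by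
  have hinj : Function.Injective (Int.cast : ℤ → ℚ) := Int.cast_injective
  apply hinj
  have hc2 : ((n.choose 2 : ℚ)) = (n:ℚ)*((n:ℚ)-1)/2 := by
    have h := choose_succ_q n 1
    simp only [Nat.choose_one_right] at h
    rw [show (2:ℕ) = 1+1 from rfl, h]
    push_cast
    ring
  push_cast [P0, P1, P2, Paa]
  rw [hc2, show n+2 = (n+1)+1 from rfl, cbz_succ_q (n+1), cbz_succ_q n]
  push_cast
  have h1 : ((n:ℚ)+1) ≠ 0 := by positivity
  have h2 : ((n:ℚ)+1+1) ≠ 0 := by positivity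
  field_simp
  ring

lemma recB (n : ℕ) :
    P0 (n:ℤ) * Sbz (n+2) + P1 (n:ℤ) * Sbz (n+1) + P2 (n:ℤ) * Sbz n = 0 := by
  have h4 := TLb n 0
  have e2 : Sbz (n+2) = (∑ k ∈ range (n+1), tbz (n+2) k) + tbz (n+2) (n+1) + tbz (n+2) (n+2) := by
    simp only [Sbz]
    rw [Finset.sum_range_succ]
    rw [show n+2 = (n+1)+1 from by omega]
    rw [Finset.sum_range_succ]
  have e1 : Sbz (n+1) = (∑ k ∈ range (n+1), tbz (n+1) k) + tbz (n+1) (n+1) := by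
    simp only [Sbz]
    rw [show n+1+1 = (n+1)+1 from rfl, Finset.sum_range_succ]
  have e0a : ∑ k ∈ range (n+1), tbz (n+2) k = (∑ k ∈ range n, tbz (n+2) k) + tbz (n+2) n :=
    Finset.sum_range_succ _ n
  have e0b : ∑ k ∈ range (n+1), tbz (n+1) k = (∑ k ∈ range n, tbz (n+1) k) + tbz (n+1) n :=
    Finset.sum_range_succ _ n
  have e0c : Sbz n = (∑ k ∈ range n, tbz n k) + tbz n n := Finset.sum_range_succ _ n
  have hcomb : ∑ k ∈ range n, Tbz n k
      = P0 (n:ℤ) * ∑ k ∈ range n, tbz (n+2) k + P1 (n:ℤ) * ∑ k ∈ range n, tbz (n+1) k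
        + P2 (n:ℤ) * ∑ k ∈ range n, tbz n k := by
    rw [Finset.mul_sum, Finset.mul_sum, Finset.mul_sum, ← Finset.sum_add_distrib,
      ← Finset.sum_add_distrib]
    rfl
  have hb := boundB n
  have sub1 : n+2-(n+1) = 1 := by omega
  have sub2 : n+2-(n+2) = 0 := by omega
  have sub3 : n+1-(n+1) = 0 := by omega
  have sub4 : n+1-n = 1 := by omega
  have sub5 : n+2-n = 2 := by omega
  have sub6 : n-n = 0 := by omega
  have c0 : cbz 0 = 1 := rfl
  have c1 : cbz 1 = 2 := rfl
  have c2 : cbz 2 = 6 := rfl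
  rw [e2, e1, e0a, e0b, e0c]
  simp only [Nat.add_zero] at h4
  simp only [tbz, sub1, sub2, sub3, sub4, sub5, sub6, c0, c1, c2] at *
  refine mul_left_cancel₀ (a := (4:ℤ)) (by norm_num) ?_
  simp only [Pbb, P0, P1, P2] at h4 hb hcomb ⊢
  push_cast at h4 hb ⊢
  linear_combination h4 + hb - 4*hcomb

lemma recA (n : ℕ) :
    P0 (n:ℤ) * Saz (n+2) + P1 (n:ℤ) * Saz (n+1) + P2 (n:ℤ) * Saz n = 0 := by
  have h2t := TLa n 0
  have e2 : Saz (n+2) = (∑ k ∈ range (n+1), taz (n+2) k) + taz (n+2) (n+1) + taz (n+2) (n+2) := by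
    simp only [Saz]
    rw [Finset.sum_range_succ]
    rw [show n+2 = (n+1)+1 from by omega]
    rw [Finset.sum_range_succ]
  have e1 : Saz (n+1) = (∑ k ∈ range (n+1), taz (n+1) k) + taz (n+1) (n+1) := by
    simp only [Saz]
    rw [show n+1+1 = (n+1)+1 from rfl, Finset.sum_range_succ]
  have e0a : ∑ k ∈ range (n+1), taz (n+2) k = (∑ k ∈ range n, taz (n+2) k) + taz (n+2) n :=
    Finset.sum_range_succ _ n
  have e0b : ∑ k ∈ range (n+1), taz (n+1) k = (∑ k ∈ range n, taz (n+1) k) + taz (n+1) n :=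
    Finset.sum_range_succ _ n
  have e0c : Saz n = (∑ k ∈ range n, taz n k) + taz n n := Finset.sum_range_succ _ n
  have hcomb : ∑ k ∈ range n, Taz n k
      = P0 (n:ℤ) * ∑ k ∈ range n, taz (n+2) k + P1 (n:ℤ) * ∑ k ∈ range n, taz (n+1) k
        + P2 (n:ℤ) * ∑ k ∈ range n, taz n k := by
    rw [Finset.mul_sum, Finset.mul_sum, Finset.mul_sum, ← Finset.sum_add_distrib,
      ← Finset.sum_add_distrib]
    rfl
  have hb := boundA n
  have sub1 : n+2-(n+1) = 1 := by omega
  have sub2 : n+2-(n+2) = 0 := by omega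
  have sub3 : n+1-(n+1) = 0 := by omega
  have sub4 : n+1-n = 1 := by omega
  have sub5 : n+2-n = 2 := by omega
  have sub6 : n-n = 0 := by omega
  rw [e2, e1, e0a, e0b, e0c]
  simp only [Nat.add_zero] at h2t
  simp only [taz, sub1, sub2, sub3, sub4, sub5, sub6, Nat.choose_zero_right,
    Nat.choose_one_right, Nat.choose_self, pow_zero, pow_one] at *
  refine mul_left_cancel₀ (a := (2:ℤ)) (by norm_num) ?_
  simp only [Paa, P0, P1, P2] at h2t hb hcomb ⊢
  push_cast at h2t hb ⊢
  linear_combination h2t + hb - 2*hcomb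

lemma mainAB (n : ℕ) : Saz n = Sbz n ∧ Saz (n+1) = Sbz (n+1) := by
  induction n with
  | zero =>
    constructor <;> norm_num [Saz, Sbz, taz, tbz, cbz, Finset.sum_range_succ]
  | succ n ih =>
    refine ⟨ih.2, ?_⟩
    have ra := recA n
    have rb := recB n
    have h : ((n:ℤ)+2)^3 * (Saz (n+2) - Sbz (n+2)) = 0 := by
      simp only [P0, P1, P2] at ra rb
      linear_combination ra - rb
        - (-8*(2*(n:ℤ)+3)*(2*(n:ℤ)^2+6*(n:ℤ)+5)) * ih.2 - (256*((n:ℤ)+1)^3) * ih.1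
    have hne : ((n:ℤ)+2)^3 ≠ 0 := by positivity
    have := (mul_eq_zero.mp h).resolve_left hne
    linarith [this]

theorem stmt_0 (n : ℕ) :
    ∑ k ∈ Finset.range (n + 1),
      ((Nat.choose (2 * k) k : ℤ) ^ 3 * (Nat.choose k (n - k)) * (-16) ^ (n - k))
    = ∑ k ∈ Finset.range (n + 1),
      ((Nat.choose (2 * k) k : ℤ) ^ 2 * (Nat.choose (2 * (n - k)) (n - k)) ^ 2) := by
  have h := (mainAB n).1
  simpa only [Saz, Sbz, taz, tbz, cbz] using h
end

section
/- For every natural number n, the identity ∑_{k=0}^n C(2k,k)^2 * C(3k,k) * C(k, n-k) * (-27)^(n-k) = ∑_{k=0}^n C(2k,k) * C(3k,k) * C(2(n-k), n-k) * C(3(n-k), n-k) holds. -/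
private lemma ratio2 (k : ℕ) : (k+1)*(k+1) * Nat.choose (2*(k+1)) (k+1)
    = (2*k+1)*(2*k+2) * Nat.choose (2*k) k := by
  have h1 := Nat.choose_mul_factorial_mul_factorial (show k ≤ 2*k by omega)
  have h2 := Nat.choose_mul_factorial_mul_factorial (show k+1 ≤ 2*(k+1) by omega)
  have e1 : 2*k - k = k := by omega
  have e2 : 2*(k+1) - (k+1) = k+1 := by omega
  rw [e1] at h1; rw [e2] at h2
  have hpos : 0 < Nat.factorial k * Nat.factorial k := by positivity
  apply Nat.eq_of_mul_eq_mul_right hpos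
  have e3 : 2*(k+1) = 2*k+1+1 := by omega
  calc (k+1)*(k+1) * Nat.choose (2*(k+1)) (k+1) * (Nat.factorial k * Nat.factorial k)
      = Nat.choose (2*(k+1)) (k+1) * Nat.factorial (k+1) * Nat.factorial (k+1) := by
        rw [Nat.factorial_succ]; try ring
    _ = Nat.factorial (2*(k+1)) := h2
    _ = (2*k+2) * ((2*k+1) * Nat.factorial (2*k)) := by
        rw [e3, Nat.factorial_succ, Nat.factorial_succ]; try ring
    _ = (2*k+1)*(2*k+2) * (Nat.choose (2*k) k * Nat.factorial k * Nat.factorial k) := by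
        rw [h1]; ring
    _ = (2*k+1)*(2*k+2) * Nat.choose (2*k) k * (Nat.factorial k * Nat.factorial k) := by ring

private lemma ratio3 (k : ℕ) : (k+1)*(2*k+1)*(2*k+2) * Nat.choose (3*(k+1)) (k+1)
    = (3*k+1)*(3*k+2)*(3*k+3) * Nat.choose (3*k) k := by
  have h1 := Nat.choose_mul_factorial_mul_factorial (show k ≤ 3*k by omega)
  have h2 := Nat.choose_mul_factorial_mul_factorial (show k+1 ≤ 3*(k+1) by omega)
  have e1 : 3*k - k = 2*k := by omega
  have e2 : 3*(k+1) - (k+1) = 2*k+2 := by omega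
  rw [e1] at h1; rw [e2] at h2
  have hpos : 0 < Nat.factorial k * Nat.factorial (2*k) := by positivity
  apply Nat.eq_of_mul_eq_mul_right hpos
  have e3 : 3*(k+1) = 3*k+1+1+1 := by omega
  have e4 : 2*k+2 = 2*k+1+1 := by omega
  calc (k+1)*(2*k+1)*(2*k+2) * Nat.choose (3*(k+1)) (k+1) * (Nat.factorial k * Nat.factorial (2*k))
      = Nat.choose (3*(k+1)) (k+1) * Nat.factorial (k+1) * Nat.factorial (2*k+2) := by
        rw [e4, Nat.factorial_succ, Nat.factorial_succ, Nat.factorial_succ]; try ring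
    _ = Nat.factorial (3*(k+1)) := h2
    _ = (3*k+3) * ((3*k+2) * ((3*k+1) * Nat.factorial (3*k))) := by
        rw [e3, Nat.factorial_succ, Nat.factorial_succ, Nat.factorial_succ]; try ring
    _ = (3*k+1)*(3*k+2)*(3*k+3) * (Nat.choose (3*k) k * Nat.factorial k * Nat.factorial (2*k)) := by
        rw [h1]; ring
    _ = (3*k+1)*(3*k+2)*(3*k+3) * Nat.choose (3*k) k * (Nat.factorial k * Nat.factorial (2*k)) := by ring

private def A (m : ℕ) : ℤ := (Nat.choose (2*m) m : ℤ) * (Nat.choose (3*m) m : ℤ)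
private def C5 (k : ℕ) : ℤ := (Nat.choose (2*k) k : ℤ)^2 * (Nat.choose (3*k) k : ℤ)

private lemma Aratio (m : ℕ) : ((m:ℤ)+1)^2 * A (m+1) = 3*(3*(m:ℤ)+1)*(3*m+2) * A m := by
  have h2 : ((m:ℤ)+1)*((m:ℤ)+1) * Nat.choose (2*(m+1)) (m+1)
      = (2*(m:ℤ)+1)*(2*m+2) * Nat.choose (2*m) m := by exact_mod_cast congrArg (Nat.cast : ℕ → ℤ) (ratio2 m)
  have h3 : ((m:ℤ)+1)*(2*(m:ℤ)+1)*(2*m+2) * Nat.choose (3*(m+1)) (m+1)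
      = (3*(m:ℤ)+1)*(3*m+2)*(3*m+3) * Nat.choose (3*m) m := by exact_mod_cast congrArg (Nat.cast : ℕ → ℤ) (ratio3 m)
  have hnz : (2*(m:ℤ)+1)*((2*m+2)*((m:ℤ)+1)) ≠ 0 := by positivity
  apply mul_left_cancel₀ hnz
  unfold A
  linear_combination (((m:ℤ)+1)*(2*(m:ℤ)+1)*(2*(m:ℤ)+2)*(Nat.choose (3*(m+1)) (m+1) : ℤ)) * h2
    + ((2*(m:ℤ)+1)*(2*(m:ℤ)+2)*(Nat.choose (2*m) m : ℤ)) * h3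

private lemma C5ratio (k : ℕ) : ((k:ℤ)+1)^3 * C5 (k+1) = 6*(2*(k:ℤ)+1)*(3*k+1)*(3*k+2) * C5 k := by
  have h2 : ((k:ℤ)+1)*((k:ℤ)+1) * Nat.choose (2*(k+1)) (k+1)
      = (2*(k:ℤ)+1)*(2*k+2) * Nat.choose (2*k) k := by exact_mod_cast congrArg (Nat.cast : ℕ → ℤ) (ratio2 k)
  have h3 : ((k:ℤ)+1)*(2*(k:ℤ)+1)*(2*k+2) * Nat.choose (3*(k+1)) (k+1)
      = (3*(k:ℤ)+1)*(3*k+2)*(3*k+3) * Nat.choose (3*k) k := by exact_mod_cast congrArg (Nat.cast : ℕ → ℤ) (ratio3 k)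
  have hnz : ((k:ℤ)+1)^2*((2*(k:ℤ)+1)*(2*(k:ℤ)+2)) ≠ 0 := by positivity
  apply mul_left_cancel₀ hnz
  unfold C5
  linear_combination ((((k:ℤ)+1)^2*(Nat.choose (2*(k+1)) (k+1) : ℤ) + (2*(k:ℤ)+1)*(2*(k:ℤ)+2)*(Nat.choose (2*k) k : ℤ))
      * (((k:ℤ)+1)*(2*(k:ℤ)+1)*(2*(k:ℤ)+2)*(Nat.choose (3*(k+1)) (k+1) : ℤ))) * h2
    + (((2*(k:ℤ)+1)*(2*(k:ℤ)+2)*(Nat.choose (2*k) k : ℤ))^2) * h3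

private lemma chooseZ1 (N r : ℕ) : ((r:ℤ)+1) * (Nat.choose N (r+1) : ℤ) = ((N:ℤ) - r) * (Nat.choose N r : ℤ) := by
  rcases le_or_gt r N with h | h
  · have := Nat.choose_succ_right_eq N r
    have h' := congrArg (Nat.cast : ℕ → ℤ) this
    push_cast [Nat.cast_sub h] at h'
    linarith
  · rw [Nat.choose_eq_zero_of_lt h, Nat.choose_eq_zero_of_lt (by omega)]
    ring

private lemma chooseZ2 (N r : ℕ) : ((N:ℤ)+1) * (Nat.choose N r : ℤ) = ((r:ℤ)+1) * (Nat.choose (N+1) (r+1) : ℤ) := by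
  have := Nat.add_one_mul_choose_eq N r
  have h' := congrArg (Nat.cast : ℕ → ℤ) this
  push_cast at h'
  linarith

private lemma chooseZ1Q (N r : ℕ) : ((Nat.choose N (r+1) : ℕ) : ℚ) = ((N:ℚ) - r) * ((Nat.choose N r : ℕ) : ℚ) / ((r:ℚ)+1) := by
  rw [eq_div_iff (by positivity)]
  have h' := congrArg (Int.cast : ℤ → ℚ) (chooseZ1 N r)
  push_cast at h' ⊢
  linarith

private lemma chooseZ2Q (N r : ℕ) : ((Nat.choose (N+1) (r+1) : ℕ) : ℚ) = ((N:ℚ)+1) * ((Nat.choose N r : ℕ) : ℚ) / ((r:ℚ)+1) := by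
  rw [eq_div_iff (by positivity)]
  have h' := congrArg (Int.cast : ℤ → ℚ) (chooseZ2 N r)
  push_cast at h' ⊢
  linarith

private lemma C5ratioQ (k : ℕ) : ((C5 (k+1) : ℤ) : ℚ) = 6*(2*(k:ℚ)+1)*(3*k+1)*(3*k+2) * ((C5 k : ℤ) : ℚ) / ((k:ℚ)+1)^3 := by
  rw [eq_div_iff (by positivity)]
  have h' := congrArg (Int.cast : ℤ → ℚ) (C5ratio k)
  push_cast at h' ⊢
  linarith

private lemma AratioQ (m : ℕ) : ((A (m+1) : ℤ) : ℚ) = 3*(3*(m:ℚ)+1)*(3*m+2) * ((A m : ℤ) : ℚ) / ((m:ℚ)+1)^2 := by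
  rw [eq_div_iff (by positivity)]
  have h' := congrArg (Int.cast : ℤ → ℚ) (Aratio m)
  push_cast at h' ⊢
  linarith

private lemma A0 : A 0 = 1 := by unfold A; norm_num
private lemma A1 : A 1 = 6 := by unfold A; norm_num [Nat.choose]

private def fL (n k : ℕ) : ℤ := if k ≤ n then C5 k * (Nat.choose k (n-k) : ℤ) * (-27)^(n-k) else 0
private def gL (n k : ℕ) : ℤ :=
  if k ≤ n+2 then -(k:ℤ)^2*((n:ℤ)+2) * C5 k * (Nat.choose k (n+2-k) : ℤ) * (-27:ℤ)^(n+2-k) else 0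
private def fR (n k : ℕ) : ℤ := if k ≤ n then A k * A (n-k) else 0
private def gR (n k : ℕ) : ℤ :=
  if k ≤ n+1 then (k:ℤ)^2 * A k * ((2*(k:ℤ) - 3*(n:ℤ) - 6) * A (n+2-k) + 27*(3*(n:ℤ) - 2*k + 4) * A (n+1-k))
  else if k = n+2 then -((n:ℤ)+2)^3 * A (n+2) else 0

private lemma keyL (n k : ℕ) :
    81*(3*(n:ℤ)+2)*(3*n+4)*(n+1) * fL n k - 3*(2*(n:ℤ)+3)*(9*n^2+27*n+22) * fL (n+1) k
      + ((n:ℤ)+2)^3 * fL (n+2) k = gL n (k+1) - gL n k := by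
  rcases le_or_gt k n with hk | hk
  · obtain ⟨m, rfl⟩ : ∃ m, n = k + m := ⟨n - k, by omega⟩
    rw [fL, if_pos (by omega), fL, if_pos (by omega), fL, if_pos (by omega),
        gL, if_pos (by omega), gL, if_pos (by omega)]
    have e1 : k + m - k = m := by omega
    have e2 : k + m + 1 - k = m + 1 := by omega
    have e3 : k + m + 2 - k = m + 2 := by omega
    have e4 : k + m + 2 - (k+1) = m + 1 := by omega
    rw [e1, e2, e3, e4]
    qify
    rw [show m + 2 = (m+1)+1 from rfl, chooseZ1Q k (m+1), chooseZ1Q k m, chooseZ2Q k m, C5ratioQ k]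
    have h1 : ((m:ℚ)+1) ≠ 0 := by positivity
    have h2 : ((m:ℚ)+1+1) ≠ 0 := by positivity
    have h3 : ((k:ℚ)+1) ≠ 0 := by positivity
    field_simp
    push_cast
    ring
  · rcases Nat.lt_or_ge k (n+2) with hk2 | hk2
    · have hk1 : k = n+1 := by omega
      subst hk1
      rw [fL, if_neg (by omega), fL, if_pos (by omega), fL, if_pos (by omega),
          gL, if_pos (by omega), gL, if_pos (by omega)]
      have e1 : n + 1 - (n+1) = 0 := by omega
      have e2 : n + 2 - (n+1) = 1 := by omega
      have e3 : n + 2 - (n+1+1) = 0 := by omega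
      rw [e1, e2, e3]
      rw [show n+1+1 = n+2 from rfl]
      have h := C5ratio (n+1)
      push_cast at h ⊢
      simp only [Nat.choose_zero_right, Nat.choose_one_right]
      push_cast
      linear_combination h
    · rcases Nat.eq_or_lt_of_le hk2 with hk3 | hk3
      · have : k = n+2 := hk3.symm
        subst this
        rw [fL, if_neg (by omega), fL, if_neg (by omega), fL, if_pos (by omega),
            gL, if_neg (by omega), gL, if_pos (by omega)]
        have e1 : n + 2 - (n+2) = 0 := by omega
        rw [e1]
        simp only [Nat.choose_zero_right]
        push_cast
        ring
      · rw [fL, if_neg (by omega), fL, if_neg (by omega), fL, if_neg (by omega),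
            gL, if_neg (by omega), gL, if_neg (by omega)]
        ring

private lemma keyR (n k : ℕ) :
    81*(3*(n:ℤ)+2)*(3*n+4)*(n+1) * fR n k - 3*(2*(n:ℤ)+3)*(9*n^2+27*n+22) * fR (n+1) k
      + ((n:ℤ)+2)^3 * fR (n+2) k = gR n (k+1) - gR n k := by
  rcases le_or_gt k n with hk | hk
  · obtain ⟨m, rfl⟩ : ∃ m, n = k + m := ⟨n - k, by omega⟩
    rw [fR, if_pos (by omega), fR, if_pos (by omega), fR, if_pos (by omega),
        gR, if_pos (by omega), gR, if_pos (by omega)]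
    have e1 : k + m - k = m := by omega
    have e2 : k + m + 1 - k = m + 1 := by omega
    have e3 : k + m + 2 - k = m + 2 := by omega
    have e4 : k + m + 2 - (k+1) = m + 1 := by omega
    have e5 : k + m + 1 - (k+1) = m := by omega
    rw [e1, e2, e3, e4, e5]
    qify
    rw [show m + 2 = (m+1)+1 from rfl, AratioQ (m+1), AratioQ m, AratioQ k]
    have h1 : ((m:ℚ)+1) ≠ 0 := by positivity
    have h2 : ((m:ℚ)+1+1) ≠ 0 := by positivity
    have h3 : ((k:ℚ)+1) ≠ 0 := by positivity
    field_simp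
    push_cast
    ring
  · rcases Nat.lt_or_ge k (n+2) with hk2 | hk2
    · have hk1 : k = n+1 := by omega
      subst hk1
      rw [fR, if_neg (by omega), fR, if_pos (by omega), fR, if_pos (by omega),
          gR, if_neg (by omega), if_pos rfl, gR, if_pos (by omega)]
      have e1 : n + 1 - (n+1) = 0 := by omega
      have e2 : n + 2 - (n+1) = 1 := by omega
      rw [e1, e2]
      rw [show n+1+1 = n+2 from rfl] at *
      have h := Aratio (n+1)
      push_cast at h ⊢
      rw [A0, A1]
      linear_combination ((n:ℤ)+2) * h
    · rcases Nat.eq_or_lt_of_le hk2 with hk3 | hk3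
      · have : k = n+2 := hk3.symm
        subst this
        rw [fR, if_neg (by omega), fR, if_neg (by omega), fR, if_pos (by omega),
            gR, if_neg (by omega), if_neg (by omega), gR, if_neg (by omega), if_pos rfl]
        have e1 : n + 2 - (n+2) = 0 := by omega
        rw [e1, A0]
        push_cast
        ring
      · rw [fR, if_neg (by omega), fR, if_neg (by omega), fR, if_neg (by omega),
            gR, if_neg (by omega), if_neg (by omega), gR, if_neg (by omega), if_neg (by omega)]
        ring

private def SL (n : ℕ) : ℤ := ∑ k ∈ Finset.range (n+1), fL n k
private def SR (n : ℕ) : ℤ := ∑ k ∈ Finset.range (n+1), fR n k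

private lemma sum_fL (n N : ℕ) (h : n+1 ≤ N) : ∑ k ∈ Finset.range N, fL n k = SL n := by
  unfold SL
  symm
  apply Finset.sum_subset (Finset.range_subset_range.2 h)
  intro x _ hx
  rw [fL, if_neg (by simp at hx; omega)]

private lemma sum_fR (n N : ℕ) (h : n+1 ≤ N) : ∑ k ∈ Finset.range N, fR n k = SR n := by
  unfold SR
  symm
  apply Finset.sum_subset (Finset.range_subset_range.2 h)
  intro x _ hx
  rw [fR, if_neg (by simp at hx; omega)]

private lemma recL (n : ℕ) :
    81*(3*(n:ℤ)+2)*(3*n+4)*(n+1) * SL n - 3*(2*(n:ℤ)+3)*(9*n^2+27*n+22) * SL (n+1)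
      + ((n:ℤ)+2)^3 * SL (n+2) = 0 := by
  rw [← sum_fL n (n+3) (by omega), ← sum_fL (n+1) (n+3) (by omega), ← sum_fL (n+2) (n+3) (by omega)]
  rw [Finset.mul_sum, Finset.mul_sum, Finset.mul_sum, ← Finset.sum_sub_distrib, ← Finset.sum_add_distrib]
  rw [Finset.sum_congr rfl (fun k _ => keyL n k), Finset.sum_range_sub (gL n)]
  rw [gL, if_neg (by omega), gL, if_pos (by omega)]
  push_cast
  ring

private lemma recR (n : ℕ) :
    81*(3*(n:ℤ)+2)*(3*n+4)*(n+1) * SR n - 3*(2*(n:ℤ)+3)*(9*n^2+27*n+22) * SR (n+1)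
      + ((n:ℤ)+2)^3 * SR (n+2) = 0 := by
  rw [← sum_fR n (n+3) (by omega), ← sum_fR (n+1) (n+3) (by omega), ← sum_fR (n+2) (n+3) (by omega)]
  rw [Finset.mul_sum, Finset.mul_sum, Finset.mul_sum, ← Finset.sum_sub_distrib, ← Finset.sum_add_distrib]
  rw [Finset.sum_congr rfl (fun k _ => keyR n k), Finset.sum_range_sub (gR n)]
  rw [gR, if_neg (by omega), if_neg (by omega), gR, if_pos (by omega)]
  push_cast
  ring

private lemma base0 : SL 0 = SR 0 := by
  unfold SL SR
  simp [Finset.sum_range_succ, fL, fR, C5, A]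

private lemma base1 : SL 1 = SR 1 := by
  unfold SL SR
  simp [Finset.sum_range_succ, fL, fR, C5, A]

private lemma LeqR (n : ℕ) : SL n = SR n := by
  have key : ∀ p, SL p = SR p ∧ SL (p+1) = SR (p+1) := by
    intro p
    induction p with
    | zero => exact ⟨base0, base1⟩
    | succ q ih =>
      refine ⟨ih.2, ?_⟩
      have hL := recL q
      have hR := recR q
      have hcan : ((q:ℤ)+2)^3 * SL (q+2) = ((q:ℤ)+2)^3 * SR (q+2) := by
        linear_combination hL - hR - 81*(3*(q:ℤ)+2)*(3*(q:ℤ)+4)*((q:ℤ)+1) * ih.1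
          + 3*(2*(q:ℤ)+3)*(9*(q:ℤ)^2+27*q+22) * ih.2
      exact mul_left_cancel₀ (by positivity) hcan
  exact (key n).1

theorem stmt_1 (n : ℕ) :
    ∑ k ∈ Finset.range (n + 1),
      ((Nat.choose (2 * k) k : ℤ) ^ 2 * (Nat.choose (3 * k) k) *
        (Nat.choose k (n - k)) * (-27) ^ (n - k))
    = ∑ k ∈ Finset.range (n + 1),
      ((Nat.choose (2 * k) k : ℤ) * (Nat.choose (3 * k) k) *
        (Nat.choose (2 * (n - k)) (n - k)) * (Nat.choose (3 * (n - k)) (n - k))) := by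
  have hl : ∑ k ∈ Finset.range (n + 1),
      ((Nat.choose (2 * k) k : ℤ) ^ 2 * (Nat.choose (3 * k) k) *
        (Nat.choose k (n - k)) * (-27) ^ (n - k)) = SL n := by
    unfold SL
    apply Finset.sum_congr rfl
    intro k hk
    rw [fL, if_pos (by simp at hk; omega), C5]
  have hr : ∑ k ∈ Finset.range (n + 1),
      ((Nat.choose (2 * k) k : ℤ) * (Nat.choose (3 * k) k) *
        (Nat.choose (2 * (n - k)) (n - k)) * (Nat.choose (3 * (n - k)) (n - k))) = SR n := by
    unfold SR
    apply Finset.sum_congr rfl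
    intro k hk
    rw [fR, if_pos (by simp at hk; omega), A, A]
    ring
  rw [hl, hr, LeqR]
end

section
/- For every natural number n, the identity ∑_{k=0}^n C(4k,2k) * C(2k,k)^2 * C(k, n-k) * (-64)^(n-k) = ∑_{k=0}^n C(4k,2k) * C(2k,k) * C(4(n-k), 2(n-k)) * C(2(n-k), n-k) holds. -/
open Finset

namespace Stmt2Aux

/-- `a k = C(4k,2k) * C(2k,k)^2` as a rational number. -/
def a (k : ℕ) : ℚ := ((4*k).choose (2*k) : ℕ) * (((2*k).choose k : ℕ)) ^ 2

/-- `b k = C(4k,2k) * C(2k,k)` as a rational number. -/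
def b (k : ℕ) : ℚ := ((4*k).choose (2*k) : ℕ) * (((2*k).choose k : ℕ))

def P0 (x : ℚ) : ℚ := 1024*(x+1)*(2*x+1)*(2*x+3)
def P1 (x : ℚ) : ℚ := -8*(2*x+3)*(8*x^2+24*x+19)
def P2 (x : ℚ) : ℚ := (x+2)^3
def Q (x y : ℚ) : ℚ :=
  (2208+14416*x+26624*x^2+18176*x^3+4096*x^4)
  + (-13024-45056*x-43008*x^2-12288*x^3)*y
  + (18432+31488*x+12288*x^2)*y^2 + (-6656-4096*x)*y^3

/-- term of the left sum -/
def TL (n k : ℕ) : ℚ := a k * (k.choose (n-k) : ℕ) * (-64)^(n-k)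
/-- term of the right sum -/
def TR (n k : ℕ) : ℚ := b k * b (n-k)

def SL (n : ℕ) : ℚ := ∑ k ∈ range (n+1), TL n k
def SR (n : ℕ) : ℚ := ∑ k ∈ range (n+1), TR n k

/-- certificate for the left side -/
def gL (n k : ℕ) : ℚ :=
  -4096*((n:ℚ)+2)*(k:ℚ)^2*(2*(k:ℚ)-(n:ℚ))*(2*(k:ℚ)-(n:ℚ)-1) * a k
    * ((k.choose (n-k) : ℕ) : ℚ) * (-64)^(n-k) / ((((n-k : ℕ):ℚ)+1)*(((n-k:ℕ):ℚ)+2))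

/-- certificate for the right side -/
def gR (n k : ℕ) : ℚ :=
  (k:ℚ)^2 * Q (n:ℚ) (k:ℚ) * b k * b (n-k) / ((((n-k:ℕ):ℚ)+1)^2*(((n-k:ℕ):ℚ)+2)^2)

lemma cb4 (k : ℕ) : (4*k).choose (2*k) = Nat.centralBinom (2*k) := by
  unfold Nat.centralBinom; rw [show 2*(2*k) = 4*k by ring]

lemma cb2 (k : ℕ) : (2*k).choose k = Nat.centralBinom k := rfl

lemma cb_succ (m : ℕ) :
    ((Nat.centralBinom (m+1) : ℕ) : ℚ) = 2*(2*(m:ℚ)+1) * (Nat.centralBinom m : ℕ) / ((m:ℚ)+1) := by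
  have h := Nat.succ_mul_centralBinom_succ m
  have h' : ((m:ℚ)+1) * (Nat.centralBinom (m+1) : ℕ) = 2*(2*(m:ℚ)+1) * (Nat.centralBinom m : ℕ) := by
    exact_mod_cast h
  rw [eq_div_iff (by positivity)]
  linear_combination h'

lemma b_succ (m : ℕ) :
    b (m+1) = 4*(4*(m:ℚ)+1)*(4*(m:ℚ)+3) / ((m:ℚ)+1)^2 * b m := by
  unfold b
  rw [cb4, cb2, cb4, cb2, show 2*(m+1) = (2*m+1)+1 by ring]
  rw [cb_succ (2*m+1), cb_succ (2*m), cb_succ m]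
  push_cast
  field_simp
  ring

lemma a_succ (m : ℕ) :
    a (m+1) = 8*(4*(m:ℚ)+1)*(2*(m:ℚ)+1)*(4*(m:ℚ)+3) / ((m:ℚ)+1)^3 * a m := by
  unfold a
  rw [cb4, cb2, cb4, cb2, show 2*(m+1) = (2*m+1)+1 by ring]
  rw [cb_succ (2*m+1), cb_succ (2*m), cb_succ m]
  push_cast
  field_simp
  ring

lemma choose_two (n : ℕ) : ((n.choose 2 : ℕ) : ℚ) = (n:ℚ)*((n:ℚ)-1)/2 := by
  rcases n with _ | m
  · norm_num
  · have h := Nat.choose_succ_right_eq (m+1) 1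
    rw [Nat.choose_one_right] at h
    have h' : ((m+1 : ℕ).choose 2 : ℚ) * 2 = ((m:ℚ)+1) * m := by
      have : (m+1) - 1 = m := by omega
      rw [this] at h
      exact_mod_cast h
    field_simp
    push_cast
    linear_combination h'

end Stmt2Aux
namespace Stmt2Aux

lemma keyR (n k : ℕ) (h : k < n) :
    P0 n * TR n k + P1 n * TR (n+1) k + P2 n * TR (n+2) k = gR n (k+1) - gR n k := by
  obtain ⟨j, rfl⟩ : ∃ j, n = k + j + 1 := ⟨n-k-1, by omega⟩
  simp only [TR, gR, P0, P1, P2, Q]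
  rw [show k+j+1-k = j+1 by omega, show k+j+1+1-k = j+2 by omega,
      show k+j+1+2-k = j+3 by omega, show k+j+1-(k+1) = j by omega]
  have e3 : b (j+3) = 4*(4*((j:ℚ)+2)+1)*(4*((j:ℚ)+2)+3) / (((j:ℚ)+2)+1)^2 * b (j+2) := by
    have := b_succ (j+2); push_cast at this ⊢; convert this using 2 <;> norm_num <;> ring
  have e2 : b (j+2) = 4*(4*((j:ℚ)+1)+1)*(4*((j:ℚ)+1)+3) / (((j:ℚ)+1)+1)^2 * b (j+1) := by
    have := b_succ (j+1); push_cast at this ⊢; convert this using 2 <;> norm_num <;> ring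
  have e1 : b (j+1) = 4*(4*(j:ℚ)+1)*(4*(j:ℚ)+3) / ((j:ℚ)+1)^2 * b j := b_succ j
  have ek : b (k+1) = 4*(4*(k:ℚ)+1)*(4*(k:ℚ)+3) / ((k:ℚ)+1)^2 * b k := b_succ k
  rw [e3, e2, e1, ek]
  push_cast
  field_simp
  ring

lemma gR_zero (n : ℕ) : gR n 0 = 0 := by
  simp [gR]

lemma finR (n : ℕ) :
    gR n n + (P0 ↑n * TR n n + P1 ↑n * TR (n+1) n + P2 ↑n * TR (n+2) n)
      + P1 ↑n * TR (n+1) (n+1) + P2 ↑n * TR (n+2) (n+1) + P2 ↑n * TR (n+2) (n+2) = 0 := by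
  simp only [TR, gR, P0, P1, P2, Q]
  rw [show n-n = 0 by omega, show n+1-n = 1 by omega, show n+2-n = 2 by omega,
      show n+1-(n+1) = 0 by omega, show n+2-(n+1) = 1 by omega, show n+2-(n+2) = 0 by omega]
  have e2 : b (n+2) = 4*(4*((n:ℚ)+1)+1)*(4*((n:ℚ)+1)+3) / (((n:ℚ)+1)+1)^2 * b (n+1) := by
    have := b_succ (n+1); push_cast at this ⊢; convert this using 2 <;> norm_num <;> ring
  have e1 : b (n+1) = 4*(4*(n:ℚ)+1)*(4*(n:ℚ)+3) / ((n:ℚ)+1)^2 * b n := b_succ n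
  have hb0 : b 0 = 1 := by norm_num [b]
  have hb1 : b 1 = 12 := by
    have h1 : Nat.choose 4 2 = 6 := by decide
    have h2 : Nat.choose 2 1 = 2 := by decide
    norm_num [b, h1, h2]
  have hb2 : b 2 = 420 := by
    have h1 : Nat.choose 8 4 = 70 := by decide
    have h2 : Nat.choose 4 2 = 6 := by decide
    norm_num [b, h1, h2]
  rw [e2, e1, hb0, hb1, hb2]
  push_cast
  field_simp
  ring

lemma recR (n : ℕ) : P0 ↑n * SR n + P1 ↑n * SR (n+1) + P2 ↑n * SR (n+2) = 0 := by
  have hs1 : SR (n+1) = (∑ k ∈ range (n+1), TR (n+1) k) + TR (n+1) (n+1) := by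
    rw [SR, Finset.sum_range_succ]
  have hs2 : SR (n+2) = ((∑ k ∈ range (n+1), TR (n+2) k) + TR (n+2) (n+1)) + TR (n+2) (n+2) := by
    rw [SR, Finset.sum_range_succ, Finset.sum_range_succ]
  have hsum : (∑ k ∈ range (n+1), (P0 ↑n * TR n k + P1 ↑n * TR (n+1) k + P2 ↑n * TR (n+2) k))
      = gR n n + (P0 ↑n * TR n n + P1 ↑n * TR (n+1) n + P2 ↑n * TR (n+2) n) := by
    rw [Finset.sum_range_succ]
    congr 1
    rw [Finset.sum_congr rfl (fun k hk => keyR n k (Finset.mem_range.mp hk)),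
        Finset.sum_range_sub (gR n), gR_zero]
    ring
  have hexp : P0 ↑n * SR n + P1 ↑n * (∑ k ∈ range (n+1), TR (n+1) k)
        + P2 ↑n * (∑ k ∈ range (n+1), TR (n+2) k)
      = ∑ k ∈ range (n+1), (P0 ↑n * TR n k + P1 ↑n * TR (n+1) k + P2 ↑n * TR (n+2) k) := by
    rw [SR, Finset.mul_sum, Finset.mul_sum, Finset.mul_sum, ← Finset.sum_add_distrib,
      ← Finset.sum_add_distrib]
  rw [hs1, hs2]
  linear_combination hexp + hsum + finR n

end Stmt2Aux
namespace Stmt2Aux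

lemma gL_zero (n : ℕ) : gL n 0 = 0 := by
  simp [gL]

lemma keyL (n k : ℕ) (h : k < n) :
    P0 n * TL n k + P1 n * TL (n+1) k + P2 n * TL (n+2) k = gL n (k+1) - gL n k := by
  obtain ⟨j, rfl⟩ : ∃ j, n = k + j + 1 := ⟨n-k-1, by omega⟩
  simp only [TL, gL, P0, P1, P2]
  rw [show k+j+1-k = j+1 by omega, show k+j+1+1-k = j+2 by omega,
      show k+j+1+2-k = j+3 by omega, show k+j+1-(k+1) = j by omega]
  have pw1 : (-64:ℚ)^(j+1) = (-64:ℚ)^j * (-64) := pow_succ _ _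
  have pw2 : (-64:ℚ)^(j+2) = (-64:ℚ)^j * 4096 := by
    show (-64:ℚ)^(j+1+1) = _
    rw [pow_succ, pow_succ]; ring
  have pw3 : (-64:ℚ)^(j+3) = (-64:ℚ)^j * (-262144) := by
    show (-64:ℚ)^(j+1+1+1) = _
    rw [pow_succ, pow_succ, pow_succ]; ring
  rw [pw1, pw2, pw3]
  rcases (show k ≥ j+2 ∨ k = j+1 ∨ k = j ∨ j = k+1 ∨ j ≥ k+2 by omega) with h|h|h|h|h
  · -- main case
    obtain ⟨e, rfl⟩ : ∃ e, k = j+2+e := ⟨k-j-2, by omega⟩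
    have h1 := Nat.choose_succ_right_eq (j+2+e) j
    rw [show j+2+e-j = e+2 by omega] at h1
    have h2 := Nat.choose_succ_right_eq (j+2+e) (j+1)
    rw [show j+1+1 = j+2 by omega, show j+2+e-(j+1) = e+1 by omega] at h2
    have h3 := Nat.choose_succ_right_eq (j+2+e) (j+2)
    rw [show j+2+1 = j+3 by omega, show j+2+e-(j+2) = e by omega] at h3
    have h4 := Nat.add_one_mul_choose_eq (j+2+e) j
    have h5 := Nat.choose_succ_right_eq (j+2+e+1) j
    rw [show j+2+e+1-j = e+3 by omega] at h5
    have q3 : (((j+2+e).choose (j+3) : ℕ) : ℚ) = (e:ℚ) * ((j+2+e).choose (j+2) : ℕ) / ((j:ℚ)+3) := by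
      rw [eq_div_iff (by positivity)]
      have h3q : (((j+2+e).choose (j+3) : ℕ) : ℚ) * ((j:ℚ)+3)
          = (((j+2+e).choose (j+2) : ℕ) : ℚ) * (e:ℚ) := by exact_mod_cast h3
      linear_combination h3q
    have q2 : (((j+2+e).choose (j+2) : ℕ) : ℚ) = ((e:ℚ)+1) * ((j+2+e).choose (j+1) : ℕ) / ((j:ℚ)+2) := by
      rw [eq_div_iff (by positivity)]
      have h2q : (((j+2+e).choose (j+2) : ℕ) : ℚ) * ((j:ℚ)+2)
          = (((j+2+e).choose (j+1) : ℕ) : ℚ) * ((e:ℚ)+1) := by exact_mod_cast h2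
      linear_combination h2q
    have q1 : (((j+2+e).choose (j+1) : ℕ) : ℚ) = ((e:ℚ)+2) * ((j+2+e).choose j : ℕ) / ((j:ℚ)+1) := by
      rw [eq_div_iff (by positivity)]
      have h1q : (((j+2+e).choose (j+1) : ℕ) : ℚ) * ((j:ℚ)+1)
          = (((j+2+e).choose j : ℕ) : ℚ) * ((e:ℚ)+2) := by exact_mod_cast h1
      linear_combination h1q
    have qY : (((j+2+e+1).choose j : ℕ) : ℚ)
        = ((j:ℚ)+(e:ℚ)+3) * ((j+2+e).choose j : ℕ) / ((e:ℚ)+3) := by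
      rw [eq_div_iff (by positivity)]
      have hc := h4.trans h5
      have hcq : ((j:ℚ)+2+(e:ℚ)+1) * (((j+2+e).choose j : ℕ) : ℚ)
          = (((j+2+e+1).choose j : ℕ) : ℚ) * ((e:ℚ)+3) := by exact_mod_cast hc
      linear_combination -hcq
    have ha : a (j+2+e+1)
        = 8*(4*((j:ℚ)+(e:ℚ)+2)+1)*(2*((j:ℚ)+(e:ℚ)+2)+1)*(4*((j:ℚ)+(e:ℚ)+2)+3)
            / (((j:ℚ)+(e:ℚ)+2)+1)^3 * a (j+2+e) := by
      have := a_succ (j+2+e); push_cast at this ⊢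
      convert this using 2 <;> ring
    rw [q3, q2, q1, qY, ha]
    push_cast
    field_simp
    ring
  · -- k = j+1, n = 2j+2 : the genuine boundary identity
    subst h
    have hz1 : (j+1).choose (j+2) = 0 := Nat.choose_eq_zero_of_lt (by omega)
    have hz2 : (j+1).choose (j+3) = 0 := Nat.choose_eq_zero_of_lt (by omega)
    have hsym := Nat.choose_symm (show 2 ≤ j+2 by omega)
    rw [show j+2-2 = j by omega] at hsym
    have qc : (((j+2).choose j : ℕ) : ℚ) = ((j:ℚ)+2)*(((j:ℚ)+2)-1)/2 := by
      rw [hsym, choose_two]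
      push_cast
      ring
    have ha : a (j+1+1) = 8*(4*((j:ℚ)+1)+1)*(2*((j:ℚ)+1)+1)*(4*((j:ℚ)+1)+3)
        / (((j:ℚ)+1)+1)^3 * a (j+1) := by
      have := a_succ (j+1); push_cast at this ⊢
      convert this using 2 <;> ring
    rw [hz1, hz2, Nat.choose_self, qc, ha]
    push_cast
    field_simp
    ring
  · -- k = j, n = 2j+1 : everything vanishes
    subst h
    have hz1 : k.choose (k+1) = 0 := Nat.choose_eq_zero_of_lt (by omega)
    have hz2 : k.choose (k+2) = 0 := Nat.choose_eq_zero_of_lt (by omega)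
    have hz3 : k.choose (k+3) = 0 := Nat.choose_eq_zero_of_lt (by omega)
    rw [hz1, hz2, hz3]
    push_cast
    ring_nf
  · -- j = k+1, n = 2k+2 : everything vanishes
    subst h
    have hz1 : k.choose (k+1+1) = 0 := Nat.choose_eq_zero_of_lt (by omega)
    have hz2 : k.choose (k+1+2) = 0 := Nat.choose_eq_zero_of_lt (by omega)
    have hz3 : k.choose (k+1+3) = 0 := Nat.choose_eq_zero_of_lt (by omega)
    rw [hz1, hz2, hz3, Nat.choose_self]
    push_cast
    ring_nf
  · -- j ≥ k+2 : everything vanishes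
    obtain ⟨e, rfl⟩ : ∃ e, j = k+2+e := ⟨j-k-2, by omega⟩
    have hz1 : k.choose (k+2+e+1) = 0 := Nat.choose_eq_zero_of_lt (by omega)
    have hz2 : k.choose (k+2+e+2) = 0 := Nat.choose_eq_zero_of_lt (by omega)
    have hz3 : k.choose (k+2+e+3) = 0 := Nat.choose_eq_zero_of_lt (by omega)
    have hz4 : (k+1).choose (k+2+e) = 0 := Nat.choose_eq_zero_of_lt (by omega)
    rw [hz1, hz2, hz3, hz4]
    push_cast
    ring

lemma finL (n : ℕ) :
    gL n n + (P0 ↑n * TL n n + P1 ↑n * TL (n+1) n + P2 ↑n * TL (n+2) n)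
      + P1 ↑n * TL (n+1) (n+1) + P2 ↑n * TL (n+2) (n+1) + P2 ↑n * TL (n+2) (n+2) = 0 := by
  simp only [TL, gL, P0, P1, P2]
  rw [show n-n = 0 by omega, show n+1-n = 1 by omega, show n+2-n = 2 by omega,
      show n+1-(n+1) = 0 by omega, show n+2-(n+1) = 1 by omega, show n+2-(n+2) = 0 by omega]
  simp only [Nat.choose_zero_right, Nat.choose_one_right]
  rw [choose_two n]
  have ha2 : a (n+2) = 8*(4*((n:ℚ)+1)+1)*(2*((n:ℚ)+1)+1)*(4*((n:ℚ)+1)+3)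
      / (((n:ℚ)+1)+1)^3 * a (n+1) := by
    have := a_succ (n+1); push_cast at this ⊢
    convert this using 2 <;> ring
  have ha1 : a (n+1) = 8*(4*(n:ℚ)+1)*(2*(n:ℚ)+1)*(4*(n:ℚ)+3) / ((n:ℚ)+1)^3 * a n := a_succ n
  rw [ha2, ha1]
  push_cast
  field_simp
  ring

lemma recL (n : ℕ) : P0 ↑n * SL n + P1 ↑n * SL (n+1) + P2 ↑n * SL (n+2) = 0 := by
  have hs1 : SL (n+1) = (∑ k ∈ range (n+1), TL (n+1) k) + TL (n+1) (n+1) := by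
    rw [SL, Finset.sum_range_succ]
  have hs2 : SL (n+2) = ((∑ k ∈ range (n+1), TL (n+2) k) + TL (n+2) (n+1)) + TL (n+2) (n+2) := by
    rw [SL, Finset.sum_range_succ, Finset.sum_range_succ]
  have hsum : (∑ k ∈ range (n+1), (P0 ↑n * TL n k + P1 ↑n * TL (n+1) k + P2 ↑n * TL (n+2) k))
      = gL n n + (P0 ↑n * TL n n + P1 ↑n * TL (n+1) n + P2 ↑n * TL (n+2) n) := by
    rw [Finset.sum_range_succ]
    congr 1
    rw [Finset.sum_congr rfl (fun k hk => keyL n k (Finset.mem_range.mp hk)),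
        Finset.sum_range_sub (gL n), gL_zero]
    ring
  have hexp : P0 ↑n * SL n + P1 ↑n * (∑ k ∈ range (n+1), TL (n+1) k)
        + P2 ↑n * (∑ k ∈ range (n+1), TL (n+2) k)
      = ∑ k ∈ range (n+1), (P0 ↑n * TL n k + P1 ↑n * TL (n+1) k + P2 ↑n * TL (n+2) k) := by
    rw [SL, Finset.mul_sum, Finset.mul_sum, Finset.mul_sum, ← Finset.sum_add_distrib,
      ← Finset.sum_add_distrib]
  rw [hs1, hs2]
  linear_combination hexp + hsum + finL n

end Stmt2Aux
namespace Stmt2Aux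

lemma base0 : SL 0 = SR 0 := by
  simp [SL, SR, TL, TR, a, b]

lemma base1 : SL 1 = SR 1 := by
  have h42 : Nat.choose 4 2 = 6 := by decide
  have h21 : Nat.choose 2 1 = 2 := by decide
  simp [SL, SR, TL, TR, a, b, Finset.sum_range_succ, h42, h21]
  norm_num

lemma main (n : ℕ) : SL n = SR n := by
  have key : ∀ m, SL m = SR m ∧ SL (m+1) = SR (m+1) := by
    intro m
    induction m with
    | zero => exact ⟨base0, base1⟩
    | succ p ih =>
      refine ⟨ih.2, ?_⟩
      show SL (p+2) = SR (p+2)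
      have hL := recL p
      have hR := recR p
      have hp2 : P2 (p:ℚ) ≠ 0 := by unfold P2; positivity
      apply mul_left_cancel₀ hp2
      linear_combination hL - hR - P0 (p:ℚ) * ih.1 - P1 (p:ℚ) * ih.2
  exact (key n).1

end Stmt2Aux

theorem stmt_2 (n : ℕ) :
    ∑ k ∈ Finset.range (n + 1),
      ((Nat.choose (4 * k) (2 * k) : ℤ) * (Nat.choose (2 * k) k) ^ 2 *
        (Nat.choose k (n - k)) * (-64) ^ (n - k))
    = ∑ k ∈ Finset.range (n + 1),
      ((Nat.choose (4 * k) (2 * k) : ℤ) * (Nat.choose (2 * k) k) *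
        (Nat.choose (4 * (n - k)) (2 * (n - k))) * (Nat.choose (2 * (n - k)) (n - k))) := by
  have h := Stmt2Aux.main n
  have e1 : ((∑ k ∈ Finset.range (n + 1),
      ((Nat.choose (4 * k) (2 * k) : ℤ) * (Nat.choose (2 * k) k) ^ 2 *
        (Nat.choose k (n - k)) * (-64) ^ (n - k)) : ℤ) : ℚ) = Stmt2Aux.SL n := by
    rw [Stmt2Aux.SL]
    push_cast
    refine Finset.sum_congr rfl fun k _ => ?_
    rw [Stmt2Aux.TL, Stmt2Aux.a]
  have e2 : ((∑ k ∈ Finset.range (n + 1),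
      ((Nat.choose (4 * k) (2 * k) : ℤ) * (Nat.choose (2 * k) k) *
        (Nat.choose (4 * (n - k)) (2 * (n - k))) * (Nat.choose (2 * (n - k)) (n - k))) : ℤ) : ℚ)
      = Stmt2Aux.SR n := by
    rw [Stmt2Aux.SR]
    push_cast
    refine Finset.sum_congr rfl fun k _ => ?_
    rw [Stmt2Aux.TR, Stmt2Aux.b, Stmt2Aux.b]
    ring
  exact_mod_cast e1.trans (h.trans e2.symm)
end

section
/- For every natural number n, the identity ∑_{k=0}^n C(6k,3k) * C(3k,k) * C(2k,k) * C(k, n-k) * (-432)^(n-k) = ∑_{k=0}^n C(6k,3k) * C(3k,k) * C(6(n-k), 3(n-k)) * C(3(n-k), n-k) holds. -/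
private def cc (k : ℕ) : ℚ := (Nat.choose (6*k) (3*k) : ℚ) * (Nat.choose (3*k) k : ℚ)

private def cb (k : ℕ) : ℚ := (Nat.choose (2*k) k : ℚ)

private lemma cc_fact (m : ℕ) :
    cc m = (Nat.factorial (6*m) : ℚ) /
      ((Nat.factorial (3*m) : ℚ) * (Nat.factorial (2*m) : ℚ) * (Nat.factorial m : ℚ)) := by
  have h1 : 3*m ≤ 6*m := by omega
  have h2 : m ≤ 3*m := by omega
  rw [cc, Nat.cast_choose ℚ h1, Nat.cast_choose ℚ h2,
    show 6*m - 3*m = 3*m by omega, show 3*m - m = 2*m by omega]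
  have f3 : ((Nat.factorial (3*m)) : ℚ) ≠ 0 := by exact_mod_cast (Nat.factorial_pos _).ne'
  have f2 : ((Nat.factorial (2*m)) : ℚ) ≠ 0 := by exact_mod_cast (Nat.factorial_pos _).ne'
  have f1 : ((Nat.factorial m) : ℚ) ≠ 0 := by exact_mod_cast (Nat.factorial_pos _).ne'
  field_simp

private lemma crec (m : ℕ) :
    cc (m+1) * ((m:ℚ)+1)^2 = 12*(6*(m:ℚ)+1)*(6*(m:ℚ)+5) * cc m := by
  have e6 : Nat.factorial (6*(m+1)) = (6*m+6)*((6*m+5)*((6*m+4)*((6*m+3)*((6*m+2)*((6*m+1)*Nat.factorial (6*m)))))) := by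
    rw [show 6*(m+1) = (6*m+5)+1 by omega, Nat.factorial_succ,
        show 6*m+5 = (6*m+4)+1 by omega, Nat.factorial_succ,
        show 6*m+4 = (6*m+3)+1 by omega, Nat.factorial_succ,
        show 6*m+3 = (6*m+2)+1 by omega, Nat.factorial_succ,
        show 6*m+2 = (6*m+1)+1 by omega, Nat.factorial_succ,
        show 6*m+1 = (6*m)+1 by omega, Nat.factorial_succ]
  have e3 : Nat.factorial (3*(m+1)) = (3*m+3)*((3*m+2)*((3*m+1)*Nat.factorial (3*m))) := by
    rw [show 3*(m+1) = (3*m+2)+1 by omega, Nat.factorial_succ,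
        show 3*m+2 = (3*m+1)+1 by omega, Nat.factorial_succ,
        show 3*m+1 = (3*m)+1 by omega, Nat.factorial_succ]
  have e2 : Nat.factorial (2*(m+1)) = (2*m+2)*((2*m+1)*Nat.factorial (2*m)) := by
    rw [show 2*(m+1) = (2*m+1)+1 by omega, Nat.factorial_succ,
        show 2*m+1 = (2*m)+1 by omega, Nat.factorial_succ]
  have e1 : Nat.factorial (m+1) = (m+1)*Nat.factorial m := Nat.factorial_succ m
  rw [cc_fact, cc_fact, e6, e3, e2, e1]
  have f3 : ((Nat.factorial (3*m)) : ℚ) ≠ 0 := by exact_mod_cast (Nat.factorial_pos _).ne'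
  have f2 : ((Nat.factorial (2*m)) : ℚ) ≠ 0 := by exact_mod_cast (Nat.factorial_pos _).ne'
  have f1 : ((Nat.factorial m) : ℚ) ≠ 0 := by exact_mod_cast (Nat.factorial_pos _).ne'
  push_cast
  have g1 : ((m:ℚ)+1) ≠ 0 := by positivity
  have g2 : (2*(m:ℚ)+1) ≠ 0 := by positivity
  have g3 : (2*(m:ℚ)+2) ≠ 0 := by positivity
  field_simp
  ring

private lemma cbrec (m : ℕ) :
    cb (m+1) * ((m:ℚ)+1) = 2*(2*(m:ℚ)+1) * cb m := by
  have h := Nat.succ_mul_centralBinom_succ m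
  have h2 : ((m+1) * Nat.centralBinom (m+1) : ℚ) = (2 * (2*m+1) * Nat.centralBinom m : ℚ) := by
    exact_mod_cast congrArg (Nat.cast : ℕ → ℚ) h
  unfold Nat.centralBinom at h2
  unfold cb
  linarith [h2]

private lemma chs1 (k j : ℕ) :
    (Nat.choose k (j+1) : ℚ) * ((j:ℚ)+1) = (Nat.choose k j : ℚ) * ((k:ℚ)-(j:ℚ)) := by
  rcases le_or_gt j k with h | h
  · have := Nat.choose_succ_right_eq k j
    have hc : ((Nat.choose k (j+1) * (j+1) : ℕ) : ℚ) = ((Nat.choose k j * (k - j) : ℕ) : ℚ) := by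
      exact_mod_cast congrArg (Nat.cast : ℕ → ℚ) this
    push_cast [Nat.cast_sub h] at hc
    linarith [hc]
  · rw [Nat.choose_eq_zero_of_lt h, Nat.choose_eq_zero_of_lt (by omega)]
    push_cast
    ring

-- chs2 : C(k+1,j+1)*(j+1) = (k+1)*C(k,j)

private lemma chs2 (k j : ℕ) :
    (Nat.choose (k+1) (j+1) : ℚ) * ((j:ℚ)+1) = ((k:ℚ)+1) * (Nat.choose k j : ℚ) := by
  have := Nat.add_one_mul_choose_eq k j
  have hc : (((k+1) * Nat.choose k j : ℕ) : ℚ) = ((Nat.choose (k+1) (j+1) * (j+1) : ℕ) : ℚ) := by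
    exact_mod_cast congrArg (Nat.cast : ℕ → ℚ) this
  push_cast at hc
  linarith [hc]

-- chs3 : C(m+1,r)*((m:ℚ)+1-r) = (m+1)*C(m,r)

private lemma chs3 (m r : ℕ) :
    (Nat.choose (m+1) r : ℚ) * ((m:ℚ)+1-(r:ℚ)) = ((m:ℚ)+1) * (Nat.choose m r : ℚ) := by
  rcases le_or_gt r (m+1) with h | h
  · have := Nat.choose_mul_succ_eq m r
    have hc : ((Nat.choose m r * (m+1) : ℕ) : ℚ) = ((Nat.choose (m+1) r * (m+1-r) : ℕ) : ℚ) := by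
      exact_mod_cast congrArg (Nat.cast : ℕ → ℚ) this
    push_cast [Nat.cast_sub h] at hc
    linarith [hc]
  · rw [Nat.choose_eq_zero_of_lt h, Nat.choose_eq_zero_of_lt (by omega)]
    push_cast
    ring

private def P2q (n : ℕ) : ℚ := ((n:ℚ)+2)^3

private def P1q (n : ℕ) : ℚ := -24*(2*(n:ℚ)+3)*(18*(n:ℚ)^2+54*(n:ℚ)+41)

private def P0q (n : ℕ) : ℚ := 20736*((n:ℚ)+1)*(3*(n:ℚ)+1)*(3*(n:ℚ)+5)

private def Qp (x y : ℚ) : ℚ :=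
  (1296*x^4+5940*x^3+8928*x^2+4749*x+570) - y*(3888*x^3+14112*x^2+15264*x+4414)
    + y^2*(3888*x^2+10404*x+6336) - y^3*(1296*x+2232)

private def Gu (n k : ℕ) : ℚ :=
  (k:ℚ)^2 * Qp (n:ℚ) (k:ℚ) * cc k * cc (n+2-k) /
    ((6*((n:ℚ)-(k:ℚ))+1)*(6*((n:ℚ)-(k:ℚ))+5)*(6*((n:ℚ)-(k:ℚ))+7)*(6*((n:ℚ)-(k:ℚ))+11))

private lemma six_ne_zero (j : ℕ) (r : ℤ) (hr : ¬ ((6:ℤ) ∣ r)) : (6*(j:ℚ)+(r:ℚ)) ≠ 0 := by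
  intro h
  have h2 : (6*(j:ℤ)+r : ℤ) = 0 := by
    have : ((6*(j:ℤ)+r : ℤ) : ℚ) = 0 := by push_cast; linarith
    exact_mod_cast this
  exact hr ⟨-(j:ℤ), by linarith⟩

private lemma tel_u (n k : ℕ) (hk : k ≤ n) :
    P2q n * (cc k * cc (n+2-k)) + P1q n * (cc k * cc (n+1-k)) + P0q n * (cc k * cc (n-k))
      = Gu n (k+1) - Gu n k := by
  obtain ⟨j, rfl⟩ : ∃ j, n = k + j := ⟨n - k, by omega⟩
  rw [show k+j+2-k = j+2 by omega, show k+j+1-k = j+1 by omega, show k+j-k = j by omega]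
  have hj1 : ((j:ℚ)+1) ≠ 0 := by positivity
  have hj2 : ((j:ℚ)+2) ≠ 0 := by positivity
  have hk1 : ((k:ℚ)+1) ≠ 0 := by positivity
  have d1 : (6*(j:ℚ)+1) ≠ 0 := by have := six_ne_zero j 1 (by decide); push_cast at this; exact this
  have d5 : (6*(j:ℚ)+5) ≠ 0 := by have := six_ne_zero j 5 (by decide); push_cast at this; exact this
  have d7 : (6*(j:ℚ)+7) ≠ 0 := by have := six_ne_zero j 7 (by decide); push_cast at this; exact this
  have d11 : (6*(j:ℚ)+11) ≠ 0 := by have := six_ne_zero j 11 (by decide); push_cast at this; exact this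
  have dm5 : (6*(j:ℚ)-5) ≠ 0 := by
    have := six_ne_zero j (-5) (by decide); push_cast at this
    intro h; exact this (by linarith)
  have dm1 : (6*(j:ℚ)-1) ≠ 0 := by
    have := six_ne_zero j (-1) (by decide); push_cast at this
    intro h; exact this (by linarith)
  have ec1 : cc (j+1) = 12*(6*(j:ℚ)+1)*(6*(j:ℚ)+5) * cc j / ((j:ℚ)+1)^2 := by
    rw [eq_div_iff (by positivity)]; exact crec j
  have ec2 : cc (j+2) = 12*(6*(j:ℚ)+7)*(6*(j:ℚ)+11) * cc (j+1) / ((j:ℚ)+2)^2 := by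
    have h := crec (j+1); push_cast at h
    rw [show j+1+1 = j+2 by omega] at h
    rw [eq_div_iff (by positivity)]
    linear_combination h
  have ec3 : cc (k+1) = 12*(6*(k:ℚ)+1)*(6*(k:ℚ)+5) * cc k / ((k:ℚ)+1)^2 := by
    rw [eq_div_iff (by positivity)]; exact crec k
  have gk0 : Gu (k+j) k = (k:ℚ)^2 * Qp ((k:ℚ)+(j:ℚ)) (k:ℚ) * cc k * cc (j+2) /
      ((6*(j:ℚ)+1)*(6*(j:ℚ)+5)*(6*(j:ℚ)+7)*(6*(j:ℚ)+11)) := by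
    simp only [Gu]; rw [show k+j+2-k = j+2 by omega]; push_cast; ring_nf
  have gk1 : Gu (k+j) (k+1) = ((k:ℚ)+1)^2 * Qp ((k:ℚ)+(j:ℚ)) ((k:ℚ)+1) * cc (k+1) * cc (j+1) /
      ((6*(j:ℚ)-5)*(6*(j:ℚ)-1)*(6*(j:ℚ)+1)*(6*(j:ℚ)+5)) := by
    simp only [Gu]; rw [show k+j+2-(k+1) = j+1 by omega]; push_cast; ring_nf
  rw [gk0, gk1, ec2, ec1, ec3]
  simp only [P2q, P1q, P0q, Qp]
  push_cast
  have dm5' : (j:ℚ)*6-5 ≠ 0 := by rw [mul_comm]; exact dm5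
  have dm1' : (j:ℚ)*6-1 ≠ 0 := by rw [mul_comm]; exact dm1
  field_simp
  ring

private lemma cc_zero : cc 0 = 1 := by simp [cc]

private lemma cc_one : cc 1 = 60 := by
  have h1 : Nat.choose 6 3 = 20 := by decide
  have h2 : Nat.choose 3 1 = 3 := by decide
  simp [cc, h1, h2]; norm_num

private lemma bnd_u (n : ℕ) :
    Gu n (n+1) + P2q n * (cc (n+1) * cc 1 + cc (n+2) * cc 0) + P1q n * (cc (n+1) * cc 0) = 0 := by
  have g : Gu n (n+1) = ((n:ℚ)+1)^2 * Qp (n:ℚ) ((n:ℚ)+1) * cc (n+1) * cc 1 / 25 := by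
    simp only [Gu]; rw [show n+2-(n+1) = 1 by omega]; push_cast; ring_nf
  have ec : cc (n+2) = 12*(6*(n:ℚ)+7)*(6*(n:ℚ)+11) * cc (n+1) / ((n:ℚ)+2)^2 := by
    have h := crec (n+1); push_cast at h
    rw [show n+1+1 = n+2 by omega] at h
    rw [eq_div_iff (by positivity)]
    linear_combination h
  rw [g, ec, cc_zero, cc_one]
  simp only [P2q, P1q, Qp]
  have h2 : ((n:ℚ)+2) ≠ 0 := by positivity
  field_simp
  ring

private def U (n : ℕ) : ℚ := ∑ k ∈ Finset.range (n+1), cc k * cc (n-k)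

private lemma recU (n : ℕ) : P2q n * U (n+2) + P1q n * U (n+1) + P0q n * U n = 0 := by
  have hU2 : U (n+2) = (∑ k ∈ Finset.range (n+1), cc k * cc (n+2-k))
      + (cc (n+1) * cc 1 + cc (n+2) * cc 0) := by
    simp only [U]
    rw [Finset.sum_range_succ, Finset.sum_range_succ,
      show n+2-(n+1) = 1 by omega, Nat.sub_self]
    ring
  have hU1 : U (n+1) = (∑ k ∈ Finset.range (n+1), cc k * cc (n+1-k)) + cc (n+1) * cc 0 := by
    simp only [U]
    rw [Finset.sum_range_succ, Nat.sub_self]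
  have tel : ∑ k ∈ Finset.range (n+1),
      (P2q n * (cc k * cc (n+2-k)) + P1q n * (cc k * cc (n+1-k)) + P0q n * (cc k * cc (n-k)))
      = Gu n (n+1) - Gu n 0 := by
    rw [← Finset.sum_range_sub (fun k => Gu n k) (n+1)]
    exact Finset.sum_congr rfl fun k hk =>
      tel_u n k (Nat.lt_succ_iff.mp (Finset.mem_range.mp hk))
  have g0 : Gu n 0 = 0 := by simp [Gu]
  have expand : P2q n * U (n+2) + P1q n * U (n+1) + P0q n * U n
      = (∑ k ∈ Finset.range (n+1),
          (P2q n * (cc k * cc (n+2-k)) + P1q n * (cc k * cc (n+1-k)) + P0q n * (cc k * cc (n-k))))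
        + (P2q n * (cc (n+1) * cc 1 + cc (n+2) * cc 0) + P1q n * (cc (n+1) * cc 0)) := by
    rw [hU2, hU1]
    simp only [U]
    rw [Finset.sum_add_distrib, Finset.sum_add_distrib, ← Finset.mul_sum, ← Finset.mul_sum,
      ← Finset.mul_sum]
    ring
  rw [expand, tel, g0]
  have := bnd_u n
  linarith

private def Gv (n k : ℕ) : ℚ :=
  -(((n:ℚ)+2) * ((n:ℚ)-2*(k:ℚ)) * ((n:ℚ)+1-2*(k:ℚ)) * (k:ℚ)^2 * cc k * cb k *
    (Nat.choose (k+2) (n+2-k) : ℚ) * (-432:ℚ)^(n+2-k)) / (((k:ℚ)+1)*((k:ℚ)+2))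

private lemma tel_v (n k : ℕ) (hk : k ≤ n) :
    P2q n * (cc k * cb k * (Nat.choose k (n+2-k) : ℚ) * (-432:ℚ)^(n+2-k))
      + P1q n * (cc k * cb k * (Nat.choose k (n+1-k) : ℚ) * (-432:ℚ)^(n+1-k))
      + P0q n * (cc k * cb k * (Nat.choose k (n-k) : ℚ) * (-432:ℚ)^(n-k))
      = Gv n (k+1) - Gv n k := by
  obtain ⟨j, rfl⟩ : ∃ j, n = k + j := ⟨n - k, by omega⟩
  rw [show k+j+2-k = j+2 by omega, show k+j+1-k = j+1 by omega, show k+j-k = j by omega]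
  have hj1 : ((j:ℚ)+1) ≠ 0 := by positivity
  have hj2 : ((j:ℚ)+2) ≠ 0 := by positivity
  have hk1 : ((k:ℚ)+1) ≠ 0 := by positivity
  have hk2 : ((k:ℚ)+2) ≠ 0 := by positivity
  have hk3 : ((k:ℚ)+3) ≠ 0 := by positivity
  have gv0 : Gv (k+j) k = -(((k:ℚ)+(j:ℚ)+2) * ((k:ℚ)+(j:ℚ)-2*(k:ℚ)) * ((k:ℚ)+(j:ℚ)+1-2*(k:ℚ))
      * (k:ℚ)^2 * cc k * cb k * (Nat.choose (k+2) (j+2) : ℚ) * (-432:ℚ)^(j+2))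
      / (((k:ℚ)+1)*((k:ℚ)+2)) := by
    simp only [Gv]; rw [show k+j+2-k = j+2 by omega]; push_cast; ring_nf
  have gv1 : Gv (k+j) (k+1) = -(((k:ℚ)+(j:ℚ)+2) * ((k:ℚ)+(j:ℚ)-2*((k:ℚ)+1)) * ((k:ℚ)+(j:ℚ)+1-2*((k:ℚ)+1))
      * ((k:ℚ)+1)^2 * cc (k+1) * cb (k+1) * (Nat.choose (k+3) (j+1) : ℚ) * (-432:ℚ)^(j+1))
      / (((k:ℚ)+2)*((k:ℚ)+3)) := by
    simp only [Gv]; rw [show k+j+2-(k+1) = j+1 by omega, show k+1+2 = k+3 by omega]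
    push_cast; ring_nf
  rw [gv0, gv1]
  rcases le_or_gt j k with hjk | hjk
  · have hjq : (j:ℚ) ≤ (k:ℚ) := by exact_mod_cast hjk
    have hkj1 : ((k:ℚ)+1-(j:ℚ)) ≠ 0 := by intro h; nlinarith
    have hkj2 : ((k:ℚ)+2-(j:ℚ)) ≠ 0 := by intro h; nlinarith
    have hB : (Nat.choose k (j+1) : ℚ) = (Nat.choose k j : ℚ) * ((k:ℚ)-(j:ℚ)) / ((j:ℚ)+1) := by
      rw [eq_div_iff hj1]; exact chs1 k j
    have hC : (Nat.choose k (j+2) : ℚ)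
        = (Nat.choose k (j+1) : ℚ) * ((k:ℚ)-(j:ℚ)-1) / ((j:ℚ)+2) := by
      have h := chs1 k (j+1); push_cast at h
      rw [show j+1+1 = j+2 by omega] at h
      rw [eq_div_iff hj2]; linear_combination h
    have hD : (Nat.choose (k+2) (j+2) : ℚ)
        = ((k:ℚ)+1)*((k:ℚ)+2) * (Nat.choose k j : ℚ) / (((j:ℚ)+1)*((j:ℚ)+2)) := by
      have h1 := chs2 k j
      have h2 := chs2 (k+1) (j+1); push_cast at h2
      rw [show k+1+1 = k+2 by omega, show j+1+1 = j+2 by omega] at h2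
      rw [eq_div_iff (by positivity)]
      linear_combination ((j:ℚ)+1)*h2 + ((k:ℚ)+2)*h1
    have hE : (Nat.choose (k+3) (j+1) : ℚ)
        = ((k:ℚ)+1)*((k:ℚ)+2)*((k:ℚ)+3) * (Nat.choose k j : ℚ)
          / (((j:ℚ)+1)*(((k:ℚ)+1-(j:ℚ)))*(((k:ℚ)+2-(j:ℚ)))) := by
      have h1 := chs2 k j
      have h2 := chs3 (k+1) (j+1); push_cast at h2
      have h3 := chs3 (k+2) (j+1); push_cast at h3
      rw [show k+1+1 = k+2 by omega] at h2
      rw [show k+2+1 = k+3 by omega] at h3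
      rw [eq_div_iff (by exact mul_ne_zero (mul_ne_zero hj1 hkj1) hkj2)]
      linear_combination ((j:ℚ)+1)*((k:ℚ)+1-(j:ℚ))*h3 + ((j:ℚ)+1)*((k:ℚ)+3)*h2
        + ((k:ℚ)+2)*((k:ℚ)+3)*h1
    have ecc : cc (k+1) = 12*(6*(k:ℚ)+1)*(6*(k:ℚ)+5) * cc k / ((k:ℚ)+1)^2 := by
      rw [eq_div_iff (by positivity)]; exact crec k
    have ecb : cb (k+1) = 2*(2*(k:ℚ)+1) * cb k / ((k:ℚ)+1) := by
      rw [eq_div_iff hk1]; exact cbrec k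
    rw [hC, hB, hD, hE, ecc, ecb]
    simp only [P2q, P1q, P0q]
    push_cast
    field_simp
    ring
  · have main0 : (((k:ℚ)+(j:ℚ)+2) * ((k:ℚ)+(j:ℚ)-2*((k:ℚ)+1)) * ((k:ℚ)+(j:ℚ)+1-2*((k:ℚ)+1))
      * ((k:ℚ)+1)^2 * cc (k+1) * cb (k+1) * (Nat.choose (k+3) (j+1) : ℚ) * (-432:ℚ)^(j+1)) = 0 := by
      rcases (by omega : j = k+1 ∨ j = k+2 ∨ k+3 < j+1) with h | h | h
      · subst h; push_cast; ring
      · subst h; push_cast; ring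
      · rw [Nat.choose_eq_zero_of_lt h]; push_cast; ring
    rw [Nat.choose_eq_zero_of_lt (show k < j+2 by omega),
        Nat.choose_eq_zero_of_lt (show k < j+1 by omega),
        Nat.choose_eq_zero_of_lt hjk,
        Nat.choose_eq_zero_of_lt (show k+2 < j+2 by omega), main0]
    norm_num

private lemma bnd_v (n : ℕ) :
    Gv n (n+1)
      + P2q n * (cc (n+1) * cb (n+1) * (Nat.choose (n+1) 1 : ℚ) * (-432:ℚ)^1
        + cc (n+2) * cb (n+2) * (Nat.choose (n+2) 0 : ℚ) * (-432:ℚ)^0)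
      + P1q n * (cc (n+1) * cb (n+1) * (Nat.choose (n+1) 0 : ℚ) * (-432:ℚ)^0) = 0 := by
  have gv : Gv n (n+1) = -(((n:ℚ)+2)*((n:ℚ)-2*((n:ℚ)+1))*((n:ℚ)+1-2*((n:ℚ)+1))
      *((n:ℚ)+1)^2*cc (n+1)*cb (n+1)*((n:ℚ)+3)*(-432:ℚ)^1)/(((n:ℚ)+2)*((n:ℚ)+3)) := by
    simp only [Gv]
    rw [show n+2-(n+1) = 1 by omega, show n+1+2 = n+3 by omega, Nat.choose_one_right]
    push_cast; ring_nf
  have ecc : cc (n+2) = 12*(6*(n:ℚ)+7)*(6*(n:ℚ)+11) * cc (n+1) / ((n:ℚ)+2)^2 := by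
    have h := crec (n+1); push_cast at h
    rw [show n+1+1 = n+2 by omega] at h
    rw [eq_div_iff (by positivity)]; linear_combination h
  have ecb : cb (n+2) = 2*(2*(n:ℚ)+3) * cb (n+1) / ((n:ℚ)+2) := by
    have h := cbrec (n+1); push_cast at h
    rw [show n+1+1 = n+2 by omega] at h
    rw [eq_div_iff (by positivity)]; linear_combination h
  rw [gv, ecc, ecb, Nat.choose_one_right, Nat.choose_zero_right, Nat.choose_zero_right]
  simp only [P2q, P1q]
  have h2 : ((n:ℚ)+2) ≠ 0 := by positivity
  have h3 : ((n:ℚ)+3) ≠ 0 := by positivity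
  push_cast
  field_simp
  ring

private def Vq (n : ℕ) : ℚ :=
  ∑ k ∈ Finset.range (n+1), cc k * cb k * (Nat.choose k (n-k) : ℚ) * (-432:ℚ)^(n-k)

private lemma recV (n : ℕ) : P2q n * Vq (n+2) + P1q n * Vq (n+1) + P0q n * Vq n = 0 := by
  have hV2 : Vq (n+2) = (∑ k ∈ Finset.range (n+1),
        cc k * cb k * (Nat.choose k (n+2-k) : ℚ) * (-432:ℚ)^(n+2-k))
      + (cc (n+1) * cb (n+1) * (Nat.choose (n+1) 1 : ℚ) * (-432:ℚ)^1
        + cc (n+2) * cb (n+2) * (Nat.choose (n+2) 0 : ℚ) * (-432:ℚ)^0) := by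
    simp only [Vq]
    rw [Finset.sum_range_succ, Finset.sum_range_succ,
      show n+2-(n+1) = 1 by omega, Nat.sub_self]
    ring
  have hV1 : Vq (n+1) = (∑ k ∈ Finset.range (n+1),
        cc k * cb k * (Nat.choose k (n+1-k) : ℚ) * (-432:ℚ)^(n+1-k))
      + cc (n+1) * cb (n+1) * (Nat.choose (n+1) 0 : ℚ) * (-432:ℚ)^0 := by
    simp only [Vq]
    rw [Finset.sum_range_succ, Nat.sub_self]
  have tel : ∑ k ∈ Finset.range (n+1),
      (P2q n * (cc k * cb k * (Nat.choose k (n+2-k) : ℚ) * (-432:ℚ)^(n+2-k))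
        + P1q n * (cc k * cb k * (Nat.choose k (n+1-k) : ℚ) * (-432:ℚ)^(n+1-k))
        + P0q n * (cc k * cb k * (Nat.choose k (n-k) : ℚ) * (-432:ℚ)^(n-k)))
      = Gv n (n+1) - Gv n 0 := by
    rw [← Finset.sum_range_sub (fun k => Gv n k) (n+1)]
    exact Finset.sum_congr rfl fun k hk =>
      tel_v n k (Nat.lt_succ_iff.mp (Finset.mem_range.mp hk))
  have g0 : Gv n 0 = 0 := by simp [Gv]
  have expand : P2q n * Vq (n+2) + P1q n * Vq (n+1) + P0q n * Vq n
      = (∑ k ∈ Finset.range (n+1),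
          (P2q n * (cc k * cb k * (Nat.choose k (n+2-k) : ℚ) * (-432:ℚ)^(n+2-k))
            + P1q n * (cc k * cb k * (Nat.choose k (n+1-k) : ℚ) * (-432:ℚ)^(n+1-k))
            + P0q n * (cc k * cb k * (Nat.choose k (n-k) : ℚ) * (-432:ℚ)^(n-k))))
        + (P2q n * (cc (n+1) * cb (n+1) * (Nat.choose (n+1) 1 : ℚ) * (-432:ℚ)^1
            + cc (n+2) * cb (n+2) * (Nat.choose (n+2) 0 : ℚ) * (-432:ℚ)^0)
          + P1q n * (cc (n+1) * cb (n+1) * (Nat.choose (n+1) 0 : ℚ) * (-432:ℚ)^0)) := by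
    rw [hV2, hV1]
    simp only [Vq]
    rw [Finset.sum_add_distrib, Finset.sum_add_distrib, ← Finset.mul_sum, ← Finset.mul_sum,
      ← Finset.mul_sum]
    ring
  rw [expand, tel, g0]
  have := bnd_v n
  linarith

private lemma base0_s3 : U 0 = Vq 0 := by
  simp [U, Vq, cc, cb]

private lemma base1_s3 : U 1 = Vq 1 := by
  have e1 : Nat.choose 6 3 = 20 := by decide
  have e2 : Nat.choose 3 1 = 3 := by decide
  have e3 : Nat.choose 2 1 = 2 := by decide
  simp [U, Vq, cc, cb, Finset.sum_range_succ, e1, e2, e3]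
  norm_num

private lemma mainUV (n : ℕ) : U n = Vq n := by
  induction n using Nat.twoStepInduction with
  | zero => exact base0_s3
  | one => exact base1_s3
  | more n ih1 ih2 =>
    have hP : P2q n ≠ 0 := by
      have : ((n:ℚ)+2)^3 ≠ 0 := by positivity
      simpa [P2q] using this
    refine mul_left_cancel₀ hP ?_
    linear_combination recU n - recV n - P1q n * ih2 - P0q n * ih1

theorem stmt_3 (n : ℕ) :
    ∑ k ∈ Finset.range (n + 1),
      ((Nat.choose (6 * k) (3 * k) : ℤ) * (Nat.choose (3 * k) k) * (Nat.choose (2 * k) k) *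
        (Nat.choose k (n - k)) * (-432) ^ (n - k))
    = ∑ k ∈ Finset.range (n + 1),
      ((Nat.choose (6 * k) (3 * k) : ℤ) * (Nat.choose (3 * k) k) *
        (Nat.choose (6 * (n - k)) (3 * (n - k))) * (Nat.choose (3 * (n - k)) (n - k))) := by
  have h := mainUV n
  have cast1 : ((∑ k ∈ Finset.range (n + 1),
      ((Nat.choose (6 * k) (3 * k) : ℤ) * (Nat.choose (3 * k) k) * (Nat.choose (2 * k) k) *
        (Nat.choose k (n - k)) * (-432) ^ (n - k)) : ℤ) : ℚ) = Vq n := by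
    push_cast
    simp only [Vq, cc, cb]
    try exact Finset.sum_congr rfl fun k _ => by push_cast; ring
  have cast2 : ((∑ k ∈ Finset.range (n + 1),
      ((Nat.choose (6 * k) (3 * k) : ℤ) * (Nat.choose (3 * k) k) *
        (Nat.choose (6 * (n - k)) (3 * (n - k))) * (Nat.choose (3 * (n - k)) (n - k))) : ℤ) : ℚ)
      = U n := by
    push_cast
    simp only [U, cc]
    try exact Finset.sum_congr rfl fun k _ => by push_cast; ring
  have : ((∑ k ∈ Finset.range (n + 1),
      ((Nat.choose (6 * k) (3 * k) : ℤ) * (Nat.choose (3 * k) k) * (Nat.choose (2 * k) k) *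
        (Nat.choose k (n - k)) * (-432) ^ (n - k)) : ℤ) : ℚ)
      = ((∑ k ∈ Finset.range (n + 1),
      ((Nat.choose (6 * k) (3 * k) : ℤ) * (Nat.choose (3 * k) k) *
        (Nat.choose (6 * (n - k)) (3 * (n - k))) * (Nat.choose (3 * (n - k)) (n - k))) : ℤ) : ℚ) := by
    rw [cast1, cast2, h]
  exact_mod_cast this
end

section
/- For every natural number n, C(2n,n) * ∑_{k=0}^n C(2k,k)^2 * C(2(n-k), n-k) * 4^(n-k) = ∑_{k=0}^n C(4k,2k) * C(2k,k)^2 * C(k, n-k) * (-64)^(n-k). -/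
open Finset

namespace S4

/-- central binomial step, in ℚ with division -/
lemma cb_succ (m : ℕ) : (((2*(m+1)).choose (m+1) : ℕ) : ℚ)
    = 2*(2*(m:ℚ)+1) * ((2*m).choose m : ℕ) / ((m:ℚ)+1) := by
  have h : ((m:ℚ)+1) * ((2*(m+1)).choose (m+1) : ℕ) = 2*(2*(m:ℚ)+1) * ((2*m).choose m : ℕ) := by
    have := Nat.succ_mul_centralBinom_succ m
    simp only [Nat.centralBinom] at this
    exact_mod_cast this
  have hm : ((m:ℚ)+1) ≠ 0 := by positivity
  field_simp
  linarith [h]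

/-- choose right step, universal in ℚ -/
lemma ch_right (m r : ℕ) : ((m.choose (r+1) : ℕ) : ℚ)
    = ((m:ℚ)-r) * (m.choose r : ℕ) / ((r:ℚ)+1) := by
  have hr : ((r:ℚ)+1) ≠ 0 := by positivity
  rcases le_or_gt (r+1) m with h | h
  · have := Nat.choose_succ_right_eq m r
    have h2 : ((m.choose (r+1) : ℕ) : ℚ) * ((r:ℚ)+1) = (m.choose r : ℕ) * ((m:ℚ)-r) := by
      have hc : ((m - r : ℕ) : ℚ) = (m:ℚ) - r := by
        have : r ≤ m := by omega
        push_cast [this]; ring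
      calc ((m.choose (r+1) : ℕ) : ℚ) * ((r:ℚ)+1)
          = ((m.choose (r+1) * (r+1) : ℕ) : ℚ) := by push_cast; ring
        _ = ((m.choose r * (m - r) : ℕ) : ℚ) := by rw [this]
        _ = (m.choose r : ℕ) * ((m:ℚ)-r) := by push_cast; rw [hc]
    field_simp
    linarith [h2]
  · rcases Nat.lt_or_ge m r with h' | h'
    · rw [Nat.choose_eq_zero_of_lt (by omega), Nat.choose_eq_zero_of_lt h']
      simp
    · have hm : m = r := by omega
      subst hm
      rw [Nat.choose_eq_zero_of_lt (by omega)]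
      simp

/-- choose diagonal step, universal -/
lemma ch_diag (m r : ℕ) : (((m+1).choose (r+1) : ℕ) : ℚ)
    = ((m:ℚ)+1) * (m.choose r : ℕ) / ((r:ℚ)+1) := by
  have hr : ((r:ℚ)+1) ≠ 0 := by positivity
  have := Nat.add_one_mul_choose_eq m r
  have h2 : ((m:ℚ)+1) * (m.choose r : ℕ) = ((m+1).choose (r+1) : ℕ) * ((r:ℚ)+1) := by
    exact_mod_cast this
  field_simp
  linarith [h2]

/-- choose left step, needs r ≤ m -/
lemma ch_left (m r : ℕ) (h : r ≤ m) : (((m+1).choose r : ℕ) : ℚ)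
    = ((m:ℚ)+1) * (m.choose r : ℕ) / ((m:ℚ)+1-r) := by
  have hd : ((m:ℚ)+1-r) ≠ 0 := by
    have : (r:ℚ) ≤ m := by exact_mod_cast h
    intro hc; nlinarith
  have := Nat.choose_mul_succ_eq m r
  have h2 : (m.choose r : ℕ) * ((m:ℚ)+1) = ((m+1).choose r : ℕ) * ((m:ℚ)+1-r) := by
    have hc : ((m + 1 - r : ℕ) : ℚ) = (m:ℚ)+1-r := by
      have : r ≤ m+1 := by omega
      push_cast [this]; ring
    calc ((m.choose r : ℕ) : ℚ) * ((m:ℚ)+1) = ((m.choose r * (m+1) : ℕ) : ℚ) := by push_cast; ring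
      _ = (((m+1).choose r * (m+1-r) : ℕ) : ℚ) := by rw [this]
      _ = ((m+1).choose r : ℕ) * ((m:ℚ)+1-r) := by push_cast [hc]; ring
  field_simp
  linarith [h2]

def f (n k : ℕ) : ℚ :=
  ((2*n).choose n : ℕ) * (((2*k).choose k : ℕ) : ℚ)^2 * ((2*(n-k)).choose (n-k) : ℕ) * 4^(n-k)

def h (n k : ℕ) : ℚ :=
  ((4*k).choose (2*k) : ℕ) * (((2*k).choose k : ℕ) : ℚ)^2 * (k.choose (n-k) : ℕ) * (-64)^(n-k)

def u (n : ℕ) : ℚ := ∑ k ∈ range (n+1), f n k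
def v (n : ℕ) : ℚ := ∑ k ∈ range (n+1), h n k

def P0 (n : ℕ) : ℚ := 1024*((n:ℚ)+1)*(2*(n:ℚ)+1)*(2*(n:ℚ)+3)
def P1 (n : ℕ) : ℚ := -8*(2*(n:ℚ)+3)*(8*(n:ℚ)^2+24*(n:ℚ)+19)
def P2 (n : ℕ) : ℚ := ((n:ℚ)+2)^3

def G1 (n k : ℕ) : ℚ :=
  128*(k:ℚ)^2*(2*(n:ℚ)+1)*(2*(n:ℚ)+3)*(2*(n:ℚ)+1-2*(k:ℚ))
    * ((2*n).choose n : ℕ) * (((2*k).choose k : ℕ) : ℚ)^2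
    * ((2*(n-k+1)).choose (n-k+1) : ℕ) * 4^(n-k)
    / (((n:ℚ)+1) * (((n-k : ℕ) : ℚ)+2) * (2*((n-k : ℕ) : ℚ)+1))

def G2 (n k : ℕ) : ℚ :=
  -4096*(k:ℚ)^2*((n:ℚ)+2)*((n:ℚ)-2*(k:ℚ))*((n:ℚ)-2*(k:ℚ)+1)
    * ((4*k).choose (2*k) : ℕ) * (((2*k).choose k : ℕ) : ℚ)^2
    * ((k+2).choose (n-k+2) : ℕ) * (-64)^(n-k)
    / (((k:ℚ)+1)*((k:ℚ)+2))


lemma ptA (n k : ℕ) (hk : k < n) :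
    P0 n * f n k + P1 n * f (n+1) k + P2 n * f (n+2) k = G1 n (k+1) - G1 n k := by
  obtain ⟨J, rfl⟩ : ∃ J, n = k + (J+1) := ⟨n-k-1, by omega⟩
  simp only [P0, P1, P2, f, G1]
  rw [show k+(J+1) - k = J+1 by omega, show k+(J+1)+1 - k = J+2 by omega,
      show k+(J+1)+2 - k = J+3 by omega, show k+(J+1) - (k+1) = J by omega]
  rw [show J+3 = J+2+1 from rfl, show J+2 = J+1+1 from rfl,
      show k+(J+1)+2 = k+(J+1)+1+1 from rfl]
  simp only [cb_succ]
  push_cast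
  set A := (((2*k).choose k : ℕ) : ℚ) with hA
  set B := (((2*J).choose J : ℕ) : ℚ) with hB
  set C := (((2*(k+(J+1))).choose (k+(J+1)) : ℕ) : ℚ) with hC
  have d1 : ((J:ℚ)+1) ≠ 0 := by positivity
  have d2 : ((J:ℚ)+2) ≠ 0 := by positivity
  have d3 : ((J:ℚ)+3) ≠ 0 := by positivity
  have d4 : ((k:ℚ)+1) ≠ 0 := by positivity
  have d5 : ((k:ℚ)+(J:ℚ)+2) ≠ 0 := by positivity
  have d6 : ((k:ℚ)+(J:ℚ)+3) ≠ 0 := by positivity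
  have d7 : (2*(J:ℚ)+1) ≠ 0 := by positivity
  have d8 : (2*(J:ℚ)+3) ≠ 0 := by positivity
  field_simp
  ring

lemma bdA (n : ℕ) :
    G1 n n + P0 n * f n n + P1 n * (f (n+1) n + f (n+1) (n+1))
      + P2 n * (f (n+2) n + f (n+2) (n+1) + f (n+2) (n+2)) = 0 := by
  simp only [P0, P1, P2, f, G1]
  rw [show n - n = 0 by omega, show n+1 - n = 1 by omega, show n+2 - n = 2 by omega,
      show n+1 - (n+1) = 0 by omega, show n+2 - (n+1) = 1 by omega,
      show n+2 - (n+2) = 0 by omega]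
  rw [show n+2 = n+1+1 from rfl]
  simp only [cb_succ]
  norm_num
  push_cast
  set C := (((2*n).choose n : ℕ) : ℚ) with hC
  have d1 : ((n:ℚ)+1) ≠ 0 := by positivity
  have d2 : ((n:ℚ)+2) ≠ 0 := by positivity
  field_simp
  ring

lemma G1_zero (n : ℕ) : G1 n 0 = 0 := by simp [G1]

lemma recU (n : ℕ) : P0 n * u n + P1 n * u (n+1) + P2 n * u (n+2) = 0 := by
  have hsum : ∑ k ∈ range n, (P0 n * f n k + P1 n * f (n+1) k + P2 n * f (n+2) k)
      = G1 n n - G1 n 0 := by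
    rw [← Finset.sum_range_sub (fun k => G1 n k) n]
    exact Finset.sum_congr rfl (fun k hk => ptA n k (mem_range.mp hk))
  rw [G1_zero, sub_zero] at hsum
  have hb := bdA n
  simp only [u, Finset.sum_range_succ] at *
  rw [Finset.sum_add_distrib, Finset.sum_add_distrib, ← Finset.mul_sum, ← Finset.mul_sum,
      ← Finset.mul_sum] at hsum
  linarith [hsum, hb]

set_option maxHeartbeats 3000000 in
lemma ptC (n k : ℕ) (hk : k < n) :
    P0 n * h n k + P1 n * h (n+1) k + P2 n * h (n+2) k = G2 n (k+1) - G2 n k := by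
  obtain ⟨J, rfl⟩ : ∃ J, n = k + (J+1) := ⟨n-k-1, by omega⟩
  simp only [P0, P1, P2, h, G2]
  rw [show 4*k = 2*(2*k) by ring]
  rw [show k+(J+1) - k = J+1 by omega, show k+(J+1)+1 - k = J+2 by omega,
      show k+(J+1)+2 - k = J+3 by omega, show k+(J+1) - (k+1) = J by omega]
  rcases le_or_gt J k with hJk | hJk
  · -- main case J ≤ k
    have d1 : ((J:ℚ)+1) ≠ 0 := by positivity
    have d2 : ((J:ℚ)+2) ≠ 0 := by positivity
    have d3 : ((J:ℚ)+3) ≠ 0 := by positivity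
    have d4 : ((k:ℚ)+1) ≠ 0 := by positivity
    have d5 : ((k:ℚ)+2) ≠ 0 := by positivity
    have d6 : ((k:ℚ)+3) ≠ 0 := by positivity
    have d7 : (2*(k:ℚ)+1) ≠ 0 := by positivity
    have d8 : (2*(k:ℚ)+2) ≠ 0 := by positivity
    have c0 : (J:ℚ) ≤ (k:ℚ) := by exact_mod_cast hJk
    have d9 : ((k:ℚ)+1-J) ≠ 0 := by intro hc; nlinarith
    have eA : (((2*(k+1)).choose (k+1) : ℕ) : ℚ)
        = 2*(2*(k:ℚ)+1) * ((2*k).choose k : ℕ) / ((k:ℚ)+1) := cb_succ k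
    have eZ : (((4*(k+1)).choose (2*(k+1)) : ℕ) : ℚ)
        = 4*(4*(k:ℚ)+3)*(4*(k:ℚ)+1) * ((2*(2*k)).choose (2*k) : ℕ)
          / ((2*(k:ℚ)+2)*(2*(k:ℚ)+1)) := by
      rw [show 4*(k+1) = 2*(2*k+1+1) by ring, show 2*(k+1) = 2*k+1+1 by ring,
          cb_succ, cb_succ]
      push_cast
      field_simp
      ring
    have e3 : ((k.choose (J+1) : ℕ) : ℚ) = ((k:ℚ)-J) * (k.choose J : ℕ) / ((J:ℚ)+1) :=
      ch_right k J
    have e4 : ((k.choose (J+2) : ℕ) : ℚ)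
        = ((k:ℚ)-J-1)*((k:ℚ)-J) * (k.choose J : ℕ) / (((J:ℚ)+2)*((J:ℚ)+1)) := by
      rw [show J+2 = (J+1)+1 from rfl, ch_right, ch_right]
      push_cast
      field_simp
      ring
    have e5 : ((k.choose (J+3) : ℕ) : ℚ)
        = ((k:ℚ)-J-2)*((k:ℚ)-J-1)*((k:ℚ)-J) * (k.choose J : ℕ)
          / (((J:ℚ)+3)*((J:ℚ)+2)*((J:ℚ)+1)) := by
      rw [show J+3 = (J+2)+1 from rfl, ch_right, e4]
      push_cast
      field_simp
      ring
    have e1 : (((k+2).choose (J+1+2) : ℕ) : ℚ)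
        = ((k:ℚ)+2)*((k:ℚ)+1)*((k:ℚ)-J) * (k.choose J : ℕ)
          / (((J:ℚ)+3)*((J:ℚ)+2)*((J:ℚ)+1)) := by
      rw [show k+2 = (k+1)+1 from rfl, show J+1+2 = (J+1+1)+1 from rfl, ch_diag,
          show J+1+1 = (J+1)+1 from rfl, ch_diag, e3]
      push_cast
      field_simp
      ring
    have e2 : (((k+1+2).choose (J+2) : ℕ) : ℚ)
        = ((k:ℚ)+3)*((k:ℚ)+2)*((k:ℚ)+1) * (k.choose J : ℕ)
          / (((J:ℚ)+2)*((J:ℚ)+1)*((k:ℚ)+1-J)) := by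
      rw [show k+1+2 = (k+2)+1 from rfl, show J+2 = (J+1)+1 from rfl, ch_diag,
          show k+2 = (k+1)+1 from rfl, ch_diag, ch_left k J hJk]
      push_cast
      field_simp
      ring
    rw [eA, eZ, e1, e2, e3, e4, e5]
    push_cast
    set A := (((2*k).choose k : ℕ) : ℚ) with hA
    set Z := (((2*(2*k)).choose (2*k) : ℕ) : ℚ) with hZ
    set W := ((k.choose J : ℕ) : ℚ) with hW
    field_simp
    ring
  · -- degenerate case k < J : everything vanishes
    rw [Nat.choose_eq_zero_of_lt (show k < J+1 by omega),
        Nat.choose_eq_zero_of_lt (show k < J+2 by omega),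
        Nat.choose_eq_zero_of_lt (show k < J+3 by omega),
        Nat.choose_eq_zero_of_lt (show k+2 < J+1+2 by omega)]
    rcases eq_or_lt_of_le (show k+1 ≤ J from hJk) with hJ | hJ
    · subst hJ
      push_cast
      ring
    · rw [Nat.choose_eq_zero_of_lt (show k+1+2 < J+2 by omega)]
      push_cast
      ring

lemma G2_zero (n : ℕ) : G2 n 0 = 0 := by simp [G2]

set_option maxHeartbeats 3000000 in
lemma bdD (n : ℕ) :
    G2 n n + P0 n * h n n + P1 n * (h (n+1) n + h (n+1) (n+1))
      + P2 n * (h (n+2) n + h (n+2) (n+1) + h (n+2) (n+2)) = 0 := by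
  simp only [P0, P1, P2, h, G2]
  rw [show 4*n = 2*(2*n) by ring]
  rw [show n - n = 0 by omega, show n+1 - n = 1 by omega, show n+2 - n = 2 by omega,
      show n+1 - (n+1) = 0 by omega, show n+2 - (n+1) = 1 by omega,
      show n+2 - (n+2) = 0 by omega, show 0+2 = 2 from rfl]
  have d1 : ((n:ℚ)+1) ≠ 0 := by positivity
  have d2 : ((n:ℚ)+2) ≠ 0 := by positivity
  have d3 : (2*(n:ℚ)+1) ≠ 0 := by positivity
  have d4 : (2*(n:ℚ)+2) ≠ 0 := by positivity
  have d5 : (2*(n:ℚ)+3) ≠ 0 := by positivity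
  have d6 : (2*(n:ℚ)+4) ≠ 0 := by positivity
  have eA1 : (((2*(n+1)).choose (n+1) : ℕ) : ℚ)
      = 2*(2*(n:ℚ)+1) * ((2*n).choose n : ℕ) / ((n:ℚ)+1) := cb_succ n
  have eA2 : (((2*(n+2)).choose (n+2) : ℕ) : ℚ)
      = 4*(2*(n:ℚ)+3)*(2*(n:ℚ)+1) * ((2*n).choose n : ℕ) / (((n:ℚ)+1)*((n:ℚ)+2)) := by
    rw [show n+2 = (n+1)+1 from rfl, cb_succ, cb_succ]
    push_cast
    field_simp
    ring
  have eZ1 : (((4*(n+1)).choose (2*(n+1)) : ℕ) : ℚ)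
      = 4*(4*(n:ℚ)+3)*(4*(n:ℚ)+1) * ((2*(2*n)).choose (2*n) : ℕ)
        / ((2*(n:ℚ)+2)*(2*(n:ℚ)+1)) := by
    rw [show 4*(n+1) = 2*(2*n+1+1) by ring, show 2*(n+1) = 2*n+1+1 by ring,
        cb_succ, cb_succ]
    push_cast
    field_simp
    ring
  have eZ2 : (((4*(n+2)).choose (2*(n+2)) : ℕ) : ℚ)
      = 16*(4*(n:ℚ)+7)*(4*(n:ℚ)+5)*(4*(n:ℚ)+3)*(4*(n:ℚ)+1) * ((2*(2*n)).choose (2*n) : ℕ)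
        / ((2*(n:ℚ)+4)*(2*(n:ℚ)+3)*(2*(n:ℚ)+2)*(2*(n:ℚ)+1)) := by
    rw [show 4*(n+2) = 2*(2*n+1+1+1+1) by ring, show 2*(n+2) = 2*n+1+1+1+1 by ring,
        cb_succ, cb_succ, cb_succ, cb_succ]
    push_cast
    field_simp
    ring
  have e2b : ((n.choose 2 : ℕ) : ℚ) = (n:ℚ)*((n:ℚ)-1)/2 := by
    rw [show (2:ℕ) = 1+1 from rfl, ch_right]
    rw [Nat.choose_one_right]
    push_cast
    ring
  have eC2 : (((n+2).choose 2 : ℕ) : ℚ) = ((n:ℚ)+2)*((n:ℚ)+1)/2 := by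
    rw [show n+2 = (n+1)+1 from rfl, show (2:ℕ) = 1+1 from rfl, ch_diag]
    rw [Nat.choose_one_right]
    push_cast
    ring
  rw [eA1, eA2, eZ1, eZ2, e2b, eC2]
  simp only [Nat.choose_zero_right, Nat.choose_one_right]
  push_cast
  set A := (((2*n).choose n : ℕ) : ℚ) with hA
  set Z := (((2*(2*n)).choose (2*n) : ℕ) : ℚ) with hZ
  field_simp
  ring

lemma recV (n : ℕ) : P0 n * v n + P1 n * v (n+1) + P2 n * v (n+2) = 0 := by
  have hsum : ∑ k ∈ range n, (P0 n * h n k + P1 n * h (n+1) k + P2 n * h (n+2) k)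
      = G2 n n - G2 n 0 := by
    rw [← Finset.sum_range_sub (fun k => G2 n k) n]
    exact Finset.sum_congr rfl (fun k hk => ptC n k (mem_range.mp hk))
  rw [G2_zero, sub_zero] at hsum
  have hb := bdD n
  simp only [v, Finset.sum_range_succ] at *
  rw [Finset.sum_add_distrib, Finset.sum_add_distrib, ← Finset.mul_sum, ← Finset.mul_sum,
      ← Finset.mul_sum] at hsum
  linarith [hsum, hb]

lemma main (n : ℕ) : u n = v n := by
  suffices H : u n = v n ∧ u (n+1) = v (n+1) from H.1
  induction n with
  | zero =>
      constructor <;> norm_num [u, v, f, h, Finset.sum_range_succ, Nat.choose]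
  | succ m ih =>
      refine ⟨ih.2, ?_⟩
      have hp : P2 m ≠ 0 := by simp only [P2]; positivity
      have r1 := recU m
      have r2 := recV m
      have h2 : P2 m * u (m+2) = P2 m * v (m+2) := by
        linear_combination r1 - r2 - P0 m * ih.1 - P1 m * ih.2
      have h3 : u (m+2) = v (m+2) := mul_left_cancel₀ hp h2
      exact h3

end S4

theorem stmt_4 (n : ℕ) :
    (Nat.choose (2 * n) n : ℤ) *
      ∑ k ∈ Finset.range (n + 1),
        ((Nat.choose (2 * k) k : ℤ) ^ 2 * (Nat.choose (2 * (n - k)) (n - k)) * 4 ^ (n - k))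
    = ∑ k ∈ Finset.range (n + 1),
      ((Nat.choose (4 * k) (2 * k) : ℤ) * (Nat.choose (2 * k) k) ^ 2 *
        (Nat.choose k (n - k)) * (-64) ^ (n - k)) := by
  have key := S4.main n
  rw [← Int.cast_inj (α := ℚ)]
  push_cast
  have l : ((Nat.choose (2*n) n : ℕ) : ℚ) *
      ∑ k ∈ Finset.range (n+1),
        (((Nat.choose (2*k) k : ℕ) : ℚ)^2 * (Nat.choose (2*(n-k)) (n-k) : ℕ) * 4^(n-k))
      = S4.u n := by
    rw [S4.u, Finset.mul_sum]
    exact Finset.sum_congr rfl fun k _ => by rw [S4.f]; ring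
  have r : (∑ k ∈ Finset.range (n+1),
        (((Nat.choose (4*k) (2*k) : ℕ) : ℚ) * ((Nat.choose (2*k) k : ℕ) : ℚ)^2 *
          (Nat.choose k (n-k) : ℕ) * (-64)^(n-k)))
      = S4.v n := by
    rw [S4.v]
    exact Finset.sum_congr rfl fun k _ => by rw [S4.h]
  rw [l, r] at *
  convert key using 2
end

section
/- For every real m with |m| > 4, the series ∑_{k=0}^∞ k * C(2k,k)/m^k converges to (2/(m-4)) * √(m/(m-4)). -/
open Polynomial in
lemma ringChoose_rec (r : ℝ) (k : ℕ) :
    (k + 1 : ℝ) * Ring.choose r (k + 1) = (r - k) * Ring.choose r k := by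
  have h1 := Ring.descPochhammer_eq_factorial_smul_choose r (k+1)
  have h2 := Ring.descPochhammer_eq_factorial_smul_choose r k
  rw [descPochhammer_succ_right, smeval_mul] at h1
  rw [h2] at h1
  have hx : (X - (k : ℤ[X])).smeval r = r - k := by
    simp [smeval_sub, smeval_X, smeval_natCast]
  rw [hx] at h1
  have hk : (k.factorial : ℝ) ≠ 0 := by positivity
  have : ((k+1).factorial : ℝ) • Ring.choose r (k+1) = (k.factorial : ℝ) • Ring.choose r k * (r - k) := by
    push_cast at h1 ⊢
    simpa [nsmul_eq_mul] using h1.symm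
  rw [Nat.factorial_succ] at this
  push_cast at this
  simp only [smul_eq_mul] at this
  apply mul_left_cancel₀ hk
  linear_combination this



lemma ringChoose_neg_one (k : ℕ) : Ring.choose (-1 : ℝ) k = (-1) ^ k := by
  induction k with
  | zero => simp [Ring.choose_zero_right]
  | succ k ih =>
    have h := ringChoose_rec (-1) k
    rw [ih] at h
    have hk : (k + 1 : ℝ) ≠ 0 := by positivity
    refine mul_left_cancel₀ hk ?_
    rw [h, pow_succ]; push_cast; ring

lemma ringChoose_neg_half (k : ℕ) :
    Ring.choose (-(1/2) : ℝ) k = (Nat.centralBinom k : ℝ) / (-4) ^ k := by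
  induction k with
  | zero => simp [Ring.choose_zero_right, Nat.centralBinom_zero]
  | succ k ih =>
    have h := ringChoose_rec (-(1/2)) k
    rw [ih] at h
    have hc := Nat.succ_mul_centralBinom_succ k
    have hc' : ((k:ℝ) + 1) * (Nat.centralBinom (k+1) : ℝ) = 2 * (2*k+1) * Nat.centralBinom k := by
      exact_mod_cast congrArg (Nat.cast : ℕ → ℝ) hc
    have hk : (k + 1 : ℝ) ≠ 0 := by positivity
    have h4 : ((-4 : ℝ)) ^ k ≠ 0 := by positivity
    refine mul_left_cancel₀ hk ?_
    rw [h]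
    have h4' : ((-4 : ℝ)) ^ (k+1) ≠ 0 := by positivity
    field_simp
    linear_combination (-2 * (-4 : ℝ)^k) * hc'



open Finset in
lemma centralBinom_conv (n : ℕ) :
    ∑ ij ∈ antidiagonal n, (Nat.centralBinom ij.1 : ℝ) * Nat.centralBinom ij.2 = 4 ^ n := by
  have h := Ring.add_choose_eq (r := (-(1/2) : ℝ)) (s := (-(1/2) : ℝ)) n (Commute.all _ _)
  have hh : (-(1/2) : ℝ) + (-(1/2)) = -1 := by norm_num
  rw [hh, ringChoose_neg_one] at h
  have h2 : ∀ ij ∈ antidiagonal n,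
      Ring.choose (-(1/2) : ℝ) ij.1 * Ring.choose (-(1/2) : ℝ) ij.2 =
      (Nat.centralBinom ij.1 : ℝ) * Nat.centralBinom ij.2 / (-4) ^ n := by
    intro ij hij
    rw [ringChoose_neg_half, ringChoose_neg_half, div_mul_div_comm, ← pow_add,
      (Finset.HasAntidiagonal.mem_antidiagonal.mp hij)]
  rw [Finset.sum_congr rfl h2, ← Finset.sum_div] at h
  have h4 : ((-4 : ℝ)) ^ n ≠ 0 := by positivity
  rw [eq_div_iff h4] at h
  rw [← h]
  rw [← neg_neg (4:ℝ), neg_pow, neg_pow (-4:ℝ)]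
  ring

lemma centralBinom_le_four_pow (n : ℕ) : Nat.centralBinom n ≤ 4 ^ n :=
  le_trans (Nat.choose_le_choose n (by omega)) (Nat.choose_middle_le_pow n)

set_option maxHeartbeats 800000 in
lemma summable_cb (x : ℝ) (hx : |x| < 4⁻¹) :
    Summable (fun k : ℕ => |(Nat.centralBinom k : ℝ) * x ^ k|) := by
  have h4 : |4 * x| < 1 := by rw [abs_mul]; norm_num; linarith [hx]
  refine Summable.of_nonneg_of_le (f := fun k => |4 * x| ^ k) (fun k => abs_nonneg _) ?_ ?_
  · intro k
    show |(Nat.centralBinom k : ℝ) * x ^ k| ≤ |4 * x| ^ k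
    rw [abs_mul, abs_pow, abs_mul, mul_pow, Nat.abs_cast]
    gcongr
    calc (Nat.centralBinom k : ℝ) ≤ ((4 ^ k : ℕ) : ℝ) := by
          exact_mod_cast centralBinom_le_four_pow k
      _ = |(4:ℝ)| ^ k := by push_cast; norm_num
  · exact summable_geometric_of_lt_one (abs_nonneg _) h4



lemma cb_succ_le (n : ℕ) : Nat.centralBinom (n+1) ≤ 4 * Nat.centralBinom n := by
  have h := Nat.succ_mul_centralBinom_succ n
  have : (n+1) * Nat.centralBinom (n+1) ≤ (n+1) * (4 * Nat.centralBinom n) := by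
    rw [h]; ring_nf; nlinarith [Nat.centralBinom_pos n]
  exact Nat.le_of_mul_le_mul_left this (by omega)

lemma hasSum_cb (x : ℝ) (hx : |x| < 4⁻¹) :
    HasSum (fun k : ℕ => (Nat.centralBinom k : ℝ) * x ^ k)
      (Real.sqrt ((1 - 4 * x)⁻¹)) := by
  have hnorm := summable_cb x hx
  have hsum : Summable (fun k : ℕ => (Nat.centralBinom k : ℝ) * x ^ k) :=
    hnorm.of_abs
  set S := ∑' k : ℕ, (Nat.centralBinom k : ℝ) * x ^ k with hS
  have hf : HasSum (fun k : ℕ => (Nat.centralBinom k : ℝ) * x ^ k) S := hsum.hasSum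
  have h4x : |4 * x| < 1 := by rw [abs_mul]; norm_num; linarith
  have h1 : (0:ℝ) < 1 - 4 * x := by
    have : 4 * x < 1 := lt_of_le_of_lt (le_abs_self _) h4x
    linarith
  -- Cauchy product
  have hsq : S * S = (1 - 4 * x)⁻¹ := by
    have := tsum_mul_tsum_eq_tsum_sum_antidiagonal_of_summable_norm
      (f := fun k : ℕ => (Nat.centralBinom k : ℝ) * x ^ k)
      (g := fun k : ℕ => (Nat.centralBinom k : ℝ) * x ^ k) (by simpa [abs_mul, abs_pow, Nat.abs_cast] using hnorm) (by simpa [abs_mul, abs_pow, Nat.abs_cast] using hnorm)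
    rw [← hS] at this
    rw [this]
    have heq : ∀ n : ℕ, (∑ ij ∈ Finset.HasAntidiagonal.antidiagonal n,
        ((Nat.centralBinom ij.1 : ℝ) * x ^ ij.1) * ((Nat.centralBinom ij.2 : ℝ) * x ^ ij.2))
        = (4 * x) ^ n := by
      intro n
      have : ∀ ij ∈ Finset.HasAntidiagonal.antidiagonal n,
          ((Nat.centralBinom ij.1 : ℝ) * x ^ ij.1) * ((Nat.centralBinom ij.2 : ℝ) * x ^ ij.2)
          = ((Nat.centralBinom ij.1 : ℝ) * Nat.centralBinom ij.2) * x ^ n := by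
        intro ij hij
        rw [← Finset.HasAntidiagonal.mem_antidiagonal.mp hij]
        ring
      rw [Finset.sum_congr rfl this, ← Finset.sum_mul, centralBinom_conv, mul_pow]
    rw [tsum_congr heq, tsum_geometric_of_norm_lt_one (by rwa [Real.norm_eq_abs])]
  -- positivity of S
  have hpos : 0 < S := by
    set f : ℕ → ℝ := fun k => (Nat.centralBinom k : ℝ) * x ^ k with hfdef
    have he : Summable (fun j : ℕ => f (2 * j)) :=
      hsum.comp_injective (fun a b h => by omega)
    have ho : Summable (fun j : ℕ => f (2 * j + 1)) :=
      hsum.comp_injective (fun a b h => by omega)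
    have hfS : HasSum f (∑' j, f (2*j) + ∑' j, f (2*j+1)) :=
      HasSum.even_add_odd he.hasSum ho.hasSum
    have hSeq : S = ∑' j, f (2*j) + ∑' j, f (2*j+1) := hf.unique hfS
    have hg : HasSum (fun j : ℕ => f (2*j) + f (2*j+1)) S := by
      rw [hSeq]; exact he.hasSum.add ho.hasSum
    have hgnn : ∀ j, 0 ≤ f (2*j) + f (2*j+1) := by
      intro j
      have hle : (Nat.centralBinom (2*j+1) : ℝ) ≤ 4 * Nat.centralBinom (2*j) := by
        exact_mod_cast cb_succ_le (2*j)
      have hA : x ^ (2*j) = |x| ^ (2*j) := ((even_two_mul j).pow_abs (a := x)).symm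
      have hAn : (0:ℝ) ≤ |x| ^ (2*j) := by positivity
      have hcb : (0:ℝ) ≤ (Nat.centralBinom (2*j) : ℝ) := by positivity
      have hxx : -|x| ≤ x := neg_abs_le x
      have hxa : (0:ℝ) ≤ |x| := abs_nonneg x
      have hd : (0:ℝ) ≤ (Nat.centralBinom (2*j+1) : ℝ) := by positivity
      have hx4 : |x| ≤ 4⁻¹ := hx.le
      simp only [hfdef]
      rw [pow_succ, hA]
      have p1 : (0:ℝ) ≤ (Nat.centralBinom (2*j+1) : ℝ) * |x|^(2*j) * (x + |x|) := by
        apply mul_nonneg (mul_nonneg hd hAn); linarith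
      have p2 : (0:ℝ) ≤ (4 * (Nat.centralBinom (2*j) : ℝ) - Nat.centralBinom (2*j+1)) * |x|^(2*j) * |x| := by
        apply mul_nonneg (mul_nonneg (by linarith) hAn) hxa
      have p3 : (0:ℝ) ≤ (Nat.centralBinom (2*j) : ℝ) * |x|^(2*j) * (1 - 4*|x|) := by
        apply mul_nonneg (mul_nonneg hcb hAn); linarith
      nlinarith [p1, p2, p3]
    have hg0 : 0 < f 0 + f 1 := by
      simp only [hfdef]
      norm_num [Nat.centralBinom]
      cases abs_lt.mp hx with | intro h1 h2 => nlinarith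
    calc (0:ℝ) < f 0 + f 1 := hg0
      _ = (fun j : ℕ => f (2*j) + f (2*j+1)) 0 := by norm_num
      _ ≤ ∑' j : ℕ, (f (2*j) + f (2*j+1)) := hg.summable.le_tsum 0 (fun j _ => hgnn j)
      _ = S := hg.tsum_eq
  have : S = Real.sqrt ((1 - 4 * x)⁻¹) := by
    rw [← hsq, Real.sqrt_mul_self hpos.le]
  rw [← this]
  exact hf



lemma hasSum_k_cb (x : ℝ) (hx : |x| < 4⁻¹) :
    HasSum (fun k : ℕ => (k : ℝ) * (Nat.centralBinom k : ℝ) * x ^ k)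
      (2 * x * (1 - 4 * x)⁻¹ * Real.sqrt ((1 - 4 * x)⁻¹)) := by
  set t : ℕ → ℝ := fun k => (k : ℝ) * (Nat.centralBinom k : ℝ) * x ^ k with ht
  have h4x : |4 * x| < 1 := by rw [abs_mul]; norm_num; linarith
  have h1 : (0:ℝ) < 1 - 4 * x := by
    have : 4 * x < 1 := lt_of_le_of_lt (le_abs_self _) h4x
    linarith
  have hsum : Summable t := by
    apply Summable.of_norm
    refine Summable.of_nonneg_of_le (f := fun k : ℕ => (k:ℝ) * |4*x| ^ k)
      (fun k => norm_nonneg _) ?_ ?_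
    · intro k
      show ‖t k‖ ≤ (k:ℝ) * |4*x| ^ k
      rw [ht]
      simp only [norm_mul, norm_pow, Real.norm_natCast, Real.norm_eq_abs, Nat.abs_cast]
      rw [mul_assoc]
      gcongr
      calc (Nat.centralBinom k : ℝ) * |x| ^ k ≤ (4:ℝ)^k * |x|^k := by
            gcongr
            exact_mod_cast centralBinom_le_four_pow k
        _ = |4 * x| ^ k := by rw [abs_mul, mul_pow]; norm_num
    · simpa using summable_pow_mul_geometric_of_norm_lt_one 1
        (r := |4*x|) (by rw [Real.norm_eq_abs, abs_abs]; exact h4x)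
  set T := ∑' k, t k with hTdef
  have hT : HasSum t T := hsum.hasSum
  have hS := hasSum_cb x hx
  set S := Real.sqrt ((1 - 4 * x)⁻¹) with hSdef
  -- shifted sum
  have hshift : HasSum (fun k : ℕ => t (k + 1)) T := by
    have ht0 : t 0 = 0 := by simp [ht]
    refine (hasSum_nat_add_iff 1).mpr ?_
    simpa [ht0] using hT
  have heq : (fun k : ℕ => t (k + 1)) =
      fun k : ℕ => 4 * x * t k + 2 * x * ((Nat.centralBinom k : ℝ) * x ^ k) := by
    funext k
    have hc : ((k:ℝ) + 1) * (Nat.centralBinom (k+1) : ℝ) = 2 * (2*(k:ℝ)+1) * Nat.centralBinom k := by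
      exact_mod_cast congrArg (Nat.cast : ℕ → ℝ) (Nat.succ_mul_centralBinom_succ k)
    simp only [ht]
    push_cast
    rw [pow_succ]
    linear_combination (x ^ k * x) * hc
  rw [heq] at hshift
  have hcomb : HasSum (fun k : ℕ => 4 * x * t k + 2 * x * ((Nat.centralBinom k : ℝ) * x ^ k))
      (4 * x * T + 2 * x * S) := (hT.mul_left _).add (hS.mul_left _)
  have hTeq : T = 4 * x * T + 2 * x * S := hshift.unique hcomb
  have : T = 2 * x * (1 - 4 * x)⁻¹ * S := by
    field_simp
    rw [eq_div_iff (by linarith)]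
    linarith [hTeq]
  rw [← this]
  exact hT

theorem stmt_14 (m : ℝ) (hm : 4 < |m|) :
    HasSum (fun k : ℕ => (k : ℝ) * (Nat.choose (2 * k) k) / m ^ k)
      (2 / (m - 4) * Real.sqrt (m / (m - 4))) := by
  have hm0 : m ≠ 0 := by intro h; rw [h] at hm; norm_num at hm
  have hx : |m⁻¹| < 4⁻¹ := by
    rw [abs_inv]
    rw [inv_lt_inv₀ (by linarith) (by norm_num)]
    exact hm
  have h := hasSum_k_cb m⁻¹ hx
  have hm4 : m - 4 ≠ 0 := by
    intro h4
    have : m = 4 := by linarith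
    rw [this] at hm; norm_num at hm
  have hfrac : 1 - 4 * m⁻¹ = (m - 4) / m := by field_simp
  have hfun : (fun k : ℕ => (k : ℝ) * (Nat.centralBinom k : ℝ) * (m⁻¹) ^ k) =
      fun k : ℕ => (k : ℝ) * (Nat.choose (2 * k) k) / m ^ k := by
    funext k
    rw [Nat.centralBinom_eq_two_mul_choose, inv_pow, div_eq_mul_inv]
  rw [hfun, hfrac] at h
  have hval : 2 * m⁻¹ * ((m - 4) / m)⁻¹ * Real.sqrt (((m - 4) / m)⁻¹) =
      2 / (m - 4) * Real.sqrt (m / (m - 4)) := by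
    rw [inv_div]
    congr 1
    field_simp
  rw [hval] at h
  exact h
end

section
/- The sequence u_n defined by u_n = ∑_{k=0}^n C(2k,k)^2 * C(2(n-k), n-k)^2 satisfies the recurrence (n+2)^3 u_{n+2} = 8(2n+3)(2n^2+6n+5) u_{n+1} - 256(n+1)^3 u_n for all n ≥ 0. -/
private def aB (m : ℕ) : ℤ := ((2*m).choose m : ℤ)^2

private def S0 (n : ℕ) : ℤ := ∑ k ∈ Finset.range (n+1), aB k * aB (n-k)
private def S1 (n : ℕ) : ℤ := ∑ k ∈ Finset.range (n+1), (k:ℤ) * (aB k * aB (n-k))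
private def S2 (n : ℕ) : ℤ := ∑ k ∈ Finset.range (n+1), (k:ℤ)^2 * (aB k * aB (n-k))
private def S3 (n : ℕ) : ℤ := ∑ k ∈ Finset.range (n+1), (k:ℤ)^3 * (aB k * aB (n-k))

private lemma key2 (j : ℕ) : ((j:ℤ)+1)^2 * aB (j+1) = 4*(2*(j:ℤ)+1)^2 * aB j := by
  have h := Nat.succ_mul_centralBinom_succ j
  simp only [Nat.centralBinom] at h
  have h' : ((j:ℤ)+1) * ((2*(j+1)).choose (j+1) : ℤ) = 2*(2*(j:ℤ)+1) * ((2*j).choose j : ℤ) := by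
    exact_mod_cast h
  unfold aB
  linear_combination (((j:ℤ)+1) * ((2*(j+1)).choose (j+1) : ℤ) + 2*(2*(j:ℤ)+1) * ((2*j).choose j : ℤ)) * h'

private lemma starLem (n k : ℕ) (hk : k ≤ n) :
    (((n:ℤ)+1)^2 - 2*((n:ℤ)+1)*(k:ℤ) + (k:ℤ)^2) * (aB k * aB (n+1-k))
      = (4*(2*(n:ℤ)+1)^2 - 16*(2*(n:ℤ)+1)*(k:ℤ) + 16*(k:ℤ)^2) * (aB k * aB (n-k)) := by
  obtain ⟨j, rfl⟩ : ∃ j, n = k + j := ⟨n - k, (Nat.add_sub_cancel' hk).symm⟩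
  have e1 : k + j + 1 - k = j + 1 := by omega
  have e2 : k + j - k = j := by omega
  rw [e1, e2]
  push_cast
  linear_combination (aB k) * key2 j

private lemma expand3 (g : ℕ → ℤ) (p q r s : ℤ) (N : ℕ) :
    ∑ k ∈ Finset.range N, (p + q*(k:ℤ) + r*(k:ℤ)^2 + s*(k:ℤ)^3) * g k
      = p * (∑ k ∈ Finset.range N, g k) + q * (∑ k ∈ Finset.range N, (k:ℤ) * g k)
        + r * (∑ k ∈ Finset.range N, (k:ℤ)^2 * g k)
        + s * (∑ k ∈ Finset.range N, (k:ℤ)^3 * g k) := by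
  induction N with
  | zero => simp
  | succ N ih => simp only [Finset.sum_range_succ, ih]; ring

private lemma recA_s15 (n : ℕ) :
    ∑ k ∈ Finset.range (n+1+1), (((n:ℤ)+1)^2 - 2*((n:ℤ)+1)*(k:ℤ) + (k:ℤ)^2) * (aB k * aB (n+1-k))
      = ∑ k ∈ Finset.range (n+1), (4*(2*(n:ℤ)+1)^2 - 16*(2*(n:ℤ)+1)*(k:ℤ) + 16*(k:ℤ)^2) * (aB k * aB (n-k)) := by
  rw [Finset.sum_range_succ]
  have h0 : (((n:ℤ)+1)^2 - 2*((n:ℤ)+1)*((n+1:ℕ):ℤ) + ((n+1:ℕ):ℤ)^2) * (aB (n+1) * aB (n+1-(n+1))) = 0 := by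
    push_cast; ring
  rw [h0, add_zero]
  exact Finset.sum_congr rfl fun k hk => starLem n k (Finset.mem_range_succ_iff.mp hk)

private lemma recB_s15 (n : ℕ) :
    ∑ k ∈ Finset.range (n+1+1), (((n:ℤ)+1)^2*(k:ℤ) - 2*((n:ℤ)+1)*(k:ℤ)^2 + (k:ℤ)^3) * (aB k * aB (n+1-k))
      = ∑ k ∈ Finset.range (n+1), (4*(2*(n:ℤ)+1)^2*(k:ℤ) - 16*(2*(n:ℤ)+1)*(k:ℤ)^2 + 16*(k:ℤ)^3) * (aB k * aB (n-k)) := by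
  rw [Finset.sum_range_succ]
  have h0 : (((n:ℤ)+1)^2*((n+1:ℕ):ℤ) - 2*((n:ℤ)+1)*((n+1:ℕ):ℤ)^2 + ((n+1:ℕ):ℤ)^3) * (aB (n+1) * aB (n+1-(n+1))) = 0 := by
    push_cast; ring
  rw [h0, add_zero]
  refine Finset.sum_congr rfl fun k hk => ?_
  linear_combination (k:ℤ) * starLem n k (Finset.mem_range_succ_iff.mp hk)

private lemma eqA (n : ℕ) :
    ((n:ℤ)+1)^2 * S0 (n+1) - 2*((n:ℤ)+1) * S1 (n+1) + S2 (n+1)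
      = 4*(2*(n:ℤ)+1)^2 * S0 n - 16*(2*(n:ℤ)+1) * S1 n + 16 * S2 n := by
  have h := recA_s15 n
  have hl := expand3 (fun k => aB k * aB (n+1-k)) (((n:ℤ)+1)^2) (-2*((n:ℤ)+1)) 1 0 (n+1+1)
  have hr := expand3 (fun k => aB k * aB (n-k)) (4*(2*(n:ℤ)+1)^2) (-16*(2*(n:ℤ)+1)) 16 0 (n+1)
  beta_reduce at hl hr
  have hl' : ∑ k ∈ Finset.range (n+1+1), (((n:ℤ)+1)^2 - 2*((n:ℤ)+1)*(k:ℤ) + (k:ℤ)^2) * (aB k * aB (n+1-k))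
      = ∑ k ∈ Finset.range (n+1+1), ((((n:ℤ)+1)^2) + (-2*((n:ℤ)+1))*(k:ℤ) + 1*(k:ℤ)^2 + 0*(k:ℤ)^3) * (aB k * aB (n+1-k)) :=
    Finset.sum_congr rfl fun k _ => by ring
  have hr' : ∑ k ∈ Finset.range (n+1), (4*(2*(n:ℤ)+1)^2 - 16*(2*(n:ℤ)+1)*(k:ℤ) + 16*(k:ℤ)^2) * (aB k * aB (n-k))
      = ∑ k ∈ Finset.range (n+1), ((4*(2*(n:ℤ)+1)^2) + (-16*(2*(n:ℤ)+1))*(k:ℤ) + 16*(k:ℤ)^2 + 0*(k:ℤ)^3) * (aB k * aB (n-k)) :=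
    Finset.sum_congr rfl fun k _ => by ring
  rw [hl', hl, hr', hr] at h
  simp only [S0, S1, S2]
  linarith [h]

private lemma eqB (n : ℕ) :
    ((n:ℤ)+1)^2 * S1 (n+1) - 2*((n:ℤ)+1) * S2 (n+1) + S3 (n+1)
      = 4*(2*(n:ℤ)+1)^2 * S1 n - 16*(2*(n:ℤ)+1) * S2 n + 16 * S3 n := by
  have h := recB_s15 n
  have hl := expand3 (fun k => aB k * aB (n+1-k)) 0 (((n:ℤ)+1)^2) (-2*((n:ℤ)+1)) 1 (n+1+1)
  have hr := expand3 (fun k => aB k * aB (n-k)) 0 (4*(2*(n:ℤ)+1)^2) (-16*(2*(n:ℤ)+1)) 16 (n+1)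
  beta_reduce at hl hr
  have hl' : ∑ k ∈ Finset.range (n+1+1), (((n:ℤ)+1)^2*(k:ℤ) - 2*((n:ℤ)+1)*(k:ℤ)^2 + (k:ℤ)^3) * (aB k * aB (n+1-k))
      = ∑ k ∈ Finset.range (n+1+1), (0 + (((n:ℤ)+1)^2)*(k:ℤ) + (-2*((n:ℤ)+1))*(k:ℤ)^2 + 1*(k:ℤ)^3) * (aB k * aB (n+1-k)) :=
    Finset.sum_congr rfl fun k _ => by ring
  have hr' : ∑ k ∈ Finset.range (n+1), (4*(2*(n:ℤ)+1)^2*(k:ℤ) - 16*(2*(n:ℤ)+1)*(k:ℤ)^2 + 16*(k:ℤ)^3) * (aB k * aB (n-k))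
      = ∑ k ∈ Finset.range (n+1), (0 + (4*(2*(n:ℤ)+1)^2)*(k:ℤ) + (-16*(2*(n:ℤ)+1))*(k:ℤ)^2 + 16*(k:ℤ)^3) * (aB k * aB (n-k)) :=
    Finset.sum_congr rfl fun k _ => by ring
  rw [hl', hl, hr', hr] at h
  simp only [S0, S1, S2, S3]
  linarith [h]

private lemma sym1 (n : ℕ) : 2 * S1 n = (n:ℤ) * S0 n := by
  have h := Finset.sum_range_reflect (fun k => (k:ℤ) * (aB k * aB (n-k))) (n+1)
  simp only [Nat.add_sub_cancel] at h
  have h2 : ∑ j ∈ Finset.range (n+1), ((n-j:ℕ):ℤ) * (aB (n-j) * aB (n-(n-j)))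
      = ∑ j ∈ Finset.range (n+1), ((n:ℤ) + (-1)*(j:ℤ) + 0*(j:ℤ)^2 + 0*(j:ℤ)^3) * (aB j * aB (n-j)) := by
    refine Finset.sum_congr rfl fun k hk => ?_
    have hk' : k ≤ n := Finset.mem_range_succ_iff.mp hk
    rw [Nat.sub_sub_self hk', Nat.cast_sub hk']
    ring
  rw [h2, expand3 (fun k => aB k * aB (n-k)) ((n:ℤ)) (-1) 0 0 (n+1)] at h
  simp only [S0, S1]
  linarith [h]

private lemma sym3 (n : ℕ) :
    2 * S3 n = (n:ℤ)^3 * S0 n - 3*(n:ℤ)^2 * S1 n + 3*(n:ℤ) * S2 n := by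
  have h := Finset.sum_range_reflect (fun k => (k:ℤ)^3 * (aB k * aB (n-k))) (n+1)
  simp only [Nat.add_sub_cancel] at h
  have h2 : ∑ j ∈ Finset.range (n+1), ((n-j:ℕ):ℤ)^3 * (aB (n-j) * aB (n-(n-j)))
      = ∑ j ∈ Finset.range (n+1), ((n:ℤ)^3 + (-3*(n:ℤ)^2)*(j:ℤ) + (3*(n:ℤ))*(j:ℤ)^2 + (-1)*(j:ℤ)^3) * (aB j * aB (n-j)) := by
    refine Finset.sum_congr rfl fun k hk => ?_
    have hk' : k ≤ n := Finset.mem_range_succ_iff.mp hk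
    rw [Nat.sub_sub_self hk', Nat.cast_sub hk']
    ring
  rw [h2, expand3 (fun k => aB k * aB (n-k)) ((n:ℤ)^3) (-3*(n:ℤ)^2) (3*(n:ℤ)) (-1) (n+1)] at h
  simp only [S0, S1, S2, S3]
  linarith [h]

private lemma lemA1 (m : ℕ) : 2 * S2 (m+1) = 8*(2*(m:ℤ)+1) * S0 m + 32 * S2 m := by
  have s1' := sym1 (m+1); push_cast at s1'
  linear_combination 2*(eqA m) + 2*((m:ℤ)+1)*s1' - 16*(2*(m:ℤ)+1)*(sym1 m)

private lemma lemB2 (m : ℕ) :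
    ((m:ℤ)+1)^3 * S0 (m+1)
      = (16*(m:ℤ)^3+48*(m:ℤ)^2+32*(m:ℤ)+8) * S0 m - 32 * S2 m := by
  have s1' := sym1 (m+1); push_cast at s1'
  have s3' := sym3 (m+1); push_cast at s3'
  linear_combination 4*(eqB m) + 32*(sym3 m) - 2*s3' + ((m:ℤ)+1)^2*s1'
    + (-16*(m:ℤ)^2+32*(m:ℤ)+8)*(sym1 m) + ((m:ℤ)+1)*(lemA1 m)

theorem stmt_15
    (u : ℕ → ℤ)
    (hu : ∀ n, u n = ∑ k ∈ Finset.range (n + 1),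
      ((Nat.choose (2 * k) k : ℤ) ^ 2 * (Nat.choose (2 * (n - k)) (n - k)) ^ 2))
    (n : ℕ) :
    ((n : ℤ) + 2) ^ 3 * u (n + 2)
      = 8 * (2 * (n : ℤ) + 3) * (2 * (n : ℤ) ^ 2 + 6 * n + 5) * u (n + 1)
        - 256 * ((n : ℤ) + 1) ^ 3 * u n := by
  have hU : ∀ m, u m = S0 m := by
    intro m
    rw [hu m]
    refine Finset.sum_congr rfl fun k _ => ?_
    simp [aB]
  rw [hU n, hU (n+1), hU (n+2)]
  have b2 := lemB2 (n+1); push_cast at b2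
  have hss : n + 1 + 1 = n + 2 := rfl
  rw [hss] at b2
  linear_combination b2 - 16*(lemA1 n) - 16*(lemB2 n)
end

section
/- The sequence v_n = ∑_{k=0}^n C(2k,k)^2 * C(2(n-k), n-k) * 4^(n-k) satisfies the recurrence (n+2)^2 v_{n+2} = 4(8n^2+24n+19) v_{n+1} - 256(n+1)^2 v_n for all n ≥ 0. -/
private def Fk (m k : ℕ) : ℤ :=
  ((Nat.choose (2 * k) k : ℤ)) ^ 2 * (Nat.choose (2 * m) m) * 4 ^ m

private def gg (m k : ℕ) : ℤ :=
  8 * (k : ℤ) ^ 2 * ((Nat.choose (2 * k) k : ℤ)) ^ 2 * (catalan m) * 4 ^ m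

private lemma hcb (m : ℕ) :
    ((m : ℤ) + 1) * (Nat.choose (2 * m + 2) (m + 1) : ℤ)
      = 2 * (2 * m + 1) * (Nat.choose (2 * m) m : ℤ) := by
  have h := Nat.succ_mul_centralBinom_succ m
  rw [Nat.centralBinom, Nat.centralBinom] at h
  have h2 : 2 * (m + 1) = 2 * m + 2 := by ring
  rw [h2] at h
  exact_mod_cast h

private lemma hcat (m : ℕ) :
    ((m : ℤ) + 1) * (catalan m : ℤ) = (Nat.choose (2 * m) m : ℤ) := by
  have h := succ_mul_catalan_eq_centralBinom m
  rw [Nat.centralBinom] at h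
  exact_mod_cast h

private lemma key (m k : ℕ) :
    ((m : ℤ) + k + 2) ^ 2 * Fk (m + 2) k
      - 4 * (8 * ((m : ℤ) + k) ^ 2 + 24 * ((m : ℤ) + k) + 19) * Fk (m + 1) k
      + 256 * ((m : ℤ) + k + 1) ^ 2 * Fk m k
    = gg m (k + 1) - gg (m + 1) k := by
  have hC2 : ((m : ℤ) + 1 + 1) * (Nat.choose (2 * m + 4) (m + 2) : ℤ)
      = 2 * (2 * (m + 1) + 1) * (Nat.choose (2 * m + 2) (m + 1) : ℤ) := by
    have h := hcb (m + 1)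
    have h2 : 2 * (m + 1) + 2 = 2 * m + 4 := by ring
    have h3 : 2 * (m + 1) = 2 * m + 2 := by ring
    rw [h2, h3] at h
    push_cast at h ⊢
    linarith [h]
  have hC1 := hcb m
  have hQ := hcb k
  have hB := hcat m
  have hT1 : ((m : ℤ) + 1 + 1) * (catalan (m + 1) : ℤ)
      = (Nat.choose (2 * m + 2) (m + 1) : ℤ) := by
    have h := hcat (m + 1)
    have h3 : 2 * (m + 1) = 2 * m + 2 := by ring
    rw [h3] at h
    push_cast at h ⊢
    linarith [h]
  simp only [Fk, gg]
  have e1 : 2 * (m + 2) = 2 * m + 4 := by ring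
  have e2 : 2 * (m + 1) = 2 * m + 2 := by ring
  have e3 : 2 * (k + 1) = 2 * k + 2 := by ring
  rw [e1, e2, e3]
  set P : ℤ := (Nat.choose (2 * k) k : ℤ)
  set Q : ℤ := (Nat.choose (2 * k + 2) (k + 1) : ℤ)
  set B : ℤ := (Nat.choose (2 * m) m : ℤ)
  set C1 : ℤ := (Nat.choose (2 * m + 2) (m + 1) : ℤ)
  set C2 : ℤ := (Nat.choose (2 * m + 4) (m + 2) : ℤ)
  set Ct0 : ℤ := (catalan m : ℤ)
  set Ct1 : ℤ := (catalan (m + 1) : ℤ)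
  set mm : ℤ := (m : ℤ)
  set kk : ℤ := (k : ℤ)
  set t : ℤ := (4 : ℤ) ^ m with ht
  have hM : (mm + 1) * (mm + 2) * (kk + 1) ^ 2 ≠ 0 := by
    have h1 : (0:ℤ) < mm + 1 := by positivity
    have h2 : (0:ℤ) < mm + 2 := by positivity
    have h3 : (0:ℤ) < (kk + 1) ^ 2 := by positivity
    positivity
  apply mul_left_cancel₀ hM
  have S2 : ℤ := (mm + kk + 2) ^ 2
  push_cast
  linear_combination
    (16 * (mm + kk + 2) ^ 2 * (mm + 1) * (kk + 1) ^ 2 * P ^ 2 * t) * hC2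
    + ((32 * (mm + kk + 2) ^ 2 * (2 * mm + 3) * (kk + 1) ^ 2
        - 16 * (8 * (mm + kk) ^ 2 + 24 * (mm + kk) + 19) * (mm + 2) * (kk + 1) ^ 2
        + 32 * kk ^ 2 * (kk + 1) ^ 2) * P ^ 2 * t) * hC1
    + (-(64 * (mm + kk + 2) ^ 2 * (2 * mm + 3) * (2 * mm + 1)
        - 32 * (8 * (mm + kk) ^ 2 + 24 * (mm + kk) + 19) * (mm + 2) * (2 * mm + 1)
        + 256 * (mm + kk + 1) ^ 2 * (mm + 1) * (mm + 2)
        + 64 * kk ^ 2 * (2 * mm + 1)) * (kk + 1) ^ 2 * P ^ 2 * t) * hB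
    + (-8 * (mm + 1) * (mm + 2) * (kk + 1) ^ 2 * Ct0 * t
        * ((kk + 1) * Q + 2 * (2 * kk + 1) * P)) * hQ
    + (32 * kk ^ 2 * (mm + 1) * (kk + 1) ^ 2 * P ^ 2 * t) * hT1

theorem stmt_16
    (v : ℕ → ℤ)
    (hv : ∀ n, v n = ∑ k ∈ Finset.range (n + 1),
      ((Nat.choose (2 * k) k : ℤ) ^ 2 * (Nat.choose (2 * (n - k)) (n - k)) * 4 ^ (n - k)))
    (n : ℕ) :
    ((n : ℤ) + 2) ^ 2 * v (n + 2)
      = 4 * (8 * (n : ℤ) ^ 2 + 24 * n + 19) * v (n + 1)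
        - 256 * ((n : ℤ) + 1) ^ 2 * v n := by
  have hvF : ∀ m, v m = ∑ k ∈ Finset.range (m + 1), Fk (m - k) k := by
    intro m; rw [hv m]; rfl
  rw [hvF (n + 2), hvF (n + 1), hvF n]
  rw [show n + 2 + 1 = (n + 1) + 1 + 1 from rfl, Finset.sum_range_succ,
    Finset.sum_range_succ, Finset.sum_range_succ (fun k => Fk (n + 1 - k) k) (n + 1)]
  set f : ℕ → ℤ := fun k => gg (n + 1 - k) k with hf
  have htel : ∑ k ∈ Finset.range (n + 1),
      (((n : ℤ) + 2) ^ 2 * Fk (n + 2 - k) k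
        - 4 * (8 * (n : ℤ) ^ 2 + 24 * n + 19) * Fk (n + 1 - k) k
        + 256 * ((n : ℤ) + 1) ^ 2 * Fk (n - k) k)
      = f (n + 1) - f 0 := by
    rw [← Finset.sum_range_sub f (n + 1)]
    apply Finset.sum_congr rfl
    intro k hk
    have hk' : k ≤ n := by
      simpa using Nat.lt_succ_iff.mp (Finset.mem_range.mp hk)
    have e2 : n + 2 - k = (n - k) + 2 := by omega
    have e1 : n + 1 - k = (n - k) + 1 := by omega
    have e0 : n + 1 - (k + 1) = n - k := by omega
    rw [e2, e1, hf]
    simp only [e0, e1]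
    have h := key (n - k) k
    rw [Nat.cast_sub hk'] at h
    linear_combination h
  have hsum : ((n : ℤ) + 2) ^ 2 * (∑ k ∈ Finset.range (n + 1), Fk (n + 2 - k) k)
      - 4 * (8 * (n : ℤ) ^ 2 + 24 * n + 19)
          * (∑ k ∈ Finset.range (n + 1), Fk (n + 1 - k) k)
      + 256 * ((n : ℤ) + 1) ^ 2 * (∑ k ∈ Finset.range (n + 1), Fk (n - k) k)
      = f (n + 1) - f 0 := by
    rw [← htel]
    rw [Finset.mul_sum, Finset.mul_sum, Finset.mul_sum, ← Finset.sum_sub_distrib,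
      ← Finset.sum_add_distrib]
  have hf0 : f 0 = 0 := by simp [hf, gg]
  have hfn : f (n + 1) = 8 * ((n : ℤ) + 1) ^ 2 * (Nat.choose (2 * n + 2) (n + 1) : ℤ) ^ 2 := by
    have : n + 1 - (n + 1) = 0 := by omega
    rw [hf]
    simp only [this, gg, catalan_zero, pow_zero]
    have e3 : 2 * (n + 1) = 2 * n + 2 := by ring
    rw [e3]
    push_cast
    ring
  -- boundary terms
  have ha1 : Fk (n + 2 - (n + 1)) (n + 1)
      = 8 * (Nat.choose (2 * n + 2) (n + 1) : ℤ) ^ 2 := by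
    have e : n + 2 - (n + 1) = 1 := by omega
    rw [e]
    simp only [Fk]
    have e3 : 2 * (n + 1) = 2 * n + 2 := by ring
    rw [e3, show Nat.choose 2 1 = 2 from rfl]
    push_cast
    ring
  have ha2 : Fk (n + 2 - (n + 2)) (n + 2)
      = (Nat.choose (2 * n + 4) (n + 2) : ℤ) ^ 2 := by
    have e : n + 2 - (n + 2) = 0 := by omega
    rw [e]
    simp only [Fk]
    have e3 : 2 * (n + 2) = 2 * n + 4 := by ring
    rw [e3]
    norm_num
  have hb1 : Fk (n + 1 - (n + 1)) (n + 1)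
      = (Nat.choose (2 * n + 2) (n + 1) : ℤ) ^ 2 := by
    have e : n + 1 - (n + 1) = 0 := by omega
    rw [e]
    simp only [Fk]
    have e3 : 2 * (n + 1) = 2 * n + 2 := by ring
    rw [e3]
    norm_num
  rw [ha1, ha2, hb1]
  have hc : ((n : ℤ) + 1 + 1) * (Nat.choose (2 * n + 4) (n + 2) : ℤ)
      = 2 * (2 * (n + 1) + 1) * (Nat.choose (2 * n + 2) (n + 1) : ℤ) := by
    have h := hcb (n + 1)
    have h2 : 2 * (n + 1) + 2 = 2 * n + 4 := by ring
    have h3 : 2 * (n + 1) = 2 * n + 2 := by ring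
    rw [h2, h3] at h
    push_cast at h ⊢
    linarith [h]
  rw [hf0, hfn] at hsum
  set C : ℤ := (Nat.choose (2 * n + 2) (n + 1) : ℤ)
  set D : ℤ := (Nat.choose (2 * n + 4) (n + 2) : ℤ)
  linear_combination hsum + (((n : ℤ) + 2) * D + 2 * (2 * n + 3) * C) * hc
end
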